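/- arXiv:2004.08429 — 3 statements merged into one kernel-verified Lean document; each statement's English description precedes it below -/
import Mathlib

section
/- Let P be a d-dimensional polytope and v_1, ..., v_m distinct vertices of P with m ≤ d. Then there exist faces F_1, ..., F_m of P such that each F_i has dimension d - i + 1, and F_i contains v_i but does not contain v_j for any j < i. -/
open Set

/-- `C n m` : binomial coefficient with the convention `C n m = 0` for `n < 0`. -/
def C (n : ℤ) (m : ℕ) : ℤ := if n < 0 then 0 else (n.toNat).choose m

/-- Grünbaum's lower bound function `φ_k(d+s, d)`. -/
def phi (d s k : ℕ) : ℤ := C (d + 1) (k + 1) + C d (k + 1) - C ((d : ℤ) + 1 - s) (k + 1)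

/-- A polytope: convex hull of a finite set of points. -/
def IsPolytope {N : ℕ} (P : Set (EuclideanSpace ℝ (Fin N))) : Prop :=
  ∃ V : Finset (EuclideanSpace ℝ (Fin N)), P = convexHull ℝ (V : Set (EuclideanSpace ℝ (Fin N)))

/-- The dimension of a set: the dimension of its affine span. -/
noncomputable def pdim {N : ℕ} (P : Set (EuclideanSpace ℝ (Fin N))) : ℕ :=
  Module.finrank ℝ (affineSpan ℝ P).direction

/-- `F` is a face of `P`: the intersection of `P` with a supporting hyperplane
(the linear functional may be zero, so `P` itself is a face; `F` may be empty). -/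
def IsFace {N : ℕ} (P F : Set (EuclideanSpace ℝ (Fin N))) : Prop :=
  ∃ (f : EuclideanSpace ℝ (Fin N) →ₗ[ℝ] ℝ) (c : ℝ),
    (∀ x ∈ P, f x ≤ c) ∧ F = {x ∈ P | f x = c}

/-- The set of vertices of `P` (points whose singleton is a face of `P`). -/
def vertexSet {N : ℕ} (P : Set (EuclideanSpace ℝ (Fin N))) : Set (EuclideanSpace ℝ (Fin N)) :=
  {v | IsFace P {v}}

/-- The number of (nonempty) `k`-dimensional faces of `P`. -/
noncomputable def fCount {N : ℕ} (P : Set (EuclideanSpace ℝ (Fin N))) (k : ℕ) : ℕ :=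
  {F : Set (EuclideanSpace ℝ (Fin N)) | IsFace P F ∧ F.Nonempty ∧ pdim F = k}.ncard

/-- `P` is a `k`-dimensional simplex. -/
def IsSimplex {N : ℕ} (P : Set (EuclideanSpace ℝ (Fin N))) (k : ℕ) : Prop :=
  ∃ V : Finset (EuclideanSpace ℝ (Fin N)), V.card = k + 1 ∧
    AffineIndependent ℝ (Subtype.val : {x // x ∈ V} → EuclideanSpace ℝ (Fin N)) ∧
    P = convexHull ℝ (V : Set (EuclideanSpace ℝ (Fin N)))

/-- `Q` is a pyramid over `P`. -/
def IsPyramid {N : ℕ} (Q P : Set (EuclideanSpace ℝ (Fin N))) : Prop :=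
  ∃ x, x ∉ affineSpan ℝ P ∧ Q = convexHull ℝ (insert x P)

/-- `Q` is an `r`-fold pyramid over `P`. -/
def IsFoldPyramid {N : ℕ} : ℕ → Set (EuclideanSpace ℝ (Fin N)) → Set (EuclideanSpace ℝ (Fin N)) → Prop
  | 0, Q, P => Q = P
  | (r + 1), Q, P => ∃ R, IsFoldPyramid r R P ∧ IsPyramid Q R

/-- `Q` is a bipyramid over `P`: the two apices span a segment whose interior
meets the relative interior of `P`. -/
def IsBipyramid {N : ℕ} (Q P : Set (EuclideanSpace ℝ (Fin N))) : Prop :=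
  ∃ x y, x ∉ affineSpan ℝ P ∧ y ∉ affineSpan ℝ P ∧
    (openSegment ℝ x y ∩ intrinsicInterior ℝ P).Nonempty ∧
    Q = convexHull ℝ (P ∪ {x, y})

/-- `Q` is the direct sum (free sum) of `P₁` and `P₂`: their affine spans meet in a single
point that is in the relative interior of each. -/
def IsDirectSum {N : ℕ} (Q P₁ P₂ : Set (EuclideanSpace ℝ (Fin N))) : Prop :=
  ∃ z, (affineSpan ℝ P₁ : Set (EuclideanSpace ℝ (Fin N))) ∩ (affineSpan ℝ P₂) = {z} ∧
    z ∈ intrinsicInterior ℝ P₁ ∧ z ∈ intrinsicInterior ℝ P₂ ∧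
    Q = convexHull ℝ (P₁ ∪ P₂)

/-- Combinatorial equivalence: an inclusion-preserving bijection between face lattices. -/
def CombEquiv {N M : ℕ} (P : Set (EuclideanSpace ℝ (Fin N))) (Q : Set (EuclideanSpace ℝ (Fin M))) : Prop :=
  Nonempty ({F : Set (EuclideanSpace ℝ (Fin N)) // IsFace P F} ≃o
    {G : Set (EuclideanSpace ℝ (Fin M)) // IsFace Q G})

/-- `P` is combinatorially dual to `Q`: its face lattice is that of `Q` reversed. -/
def DualCombEquiv {N M : ℕ} (P : Set (EuclideanSpace ℝ (Fin N))) (Q : Set (EuclideanSpace ℝ (Fin M))) : Prop :=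
  Nonempty ({F : Set (EuclideanSpace ℝ (Fin N)) // IsFace P F} ≃o
    ({G : Set (EuclideanSpace ℝ (Fin M)) // IsFace Q G})ᵒᵈ)

/-- `P` (of dimension `d`) is simplicial: all its facets are simplices. -/
def IsSimplicial {N : ℕ} (P : Set (EuclideanSpace ℝ (Fin N))) (d : ℕ) : Prop :=
  ∀ F, IsFace P F → F.Nonempty → pdim F = d - 1 → IsSimplex F (d - 1)
variable {N : ℕ}

local notation "E" => EuclideanSpace ℝ (Fin N)

def IsArgmax (M S : Finset (EuclideanSpace ℝ (Fin N))) (f : EuclideanSpace ℝ (Fin N) →ₗ[ℝ] ℝ)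
    (c : ℝ) : Prop :=
  S.Nonempty ∧ (∀ u ∈ M, f u ≤ c) ∧ S = M.filter (fun u => f u = c)

noncomputable def vdim (s : Set (EuclideanSpace ℝ (Fin N))) : ℕ :=
  Module.finrank ℝ (vectorSpan ℝ s)

lemma hull_le_halfspace {M : Set E} {f : E →ₗ[ℝ] ℝ} {c : ℝ} (h : ∀ u ∈ M, f u ≤ c) :
    ∀ x ∈ convexHull ℝ M, f x ≤ c := by
  intro x hx
  have : convexHull ℝ M ⊆ {x | f x ≤ c} :=
    convexHull_min h (convex_halfSpace_le f.isLinear c)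
  exact this hx

lemma hull_le_hyperplane {M : Set E} {f : E →ₗ[ℝ] ℝ} {c : ℝ} (h : ∀ u ∈ M, f u = c) :
    ∀ x ∈ convexHull ℝ M, f x = c := by
  intro x hx
  have : convexHull ℝ M ⊆ {x | f x = c} :=
    convexHull_min h (convex_hyperplane f.isLinear c)
  exact this hx

lemma IsArgmax.subset {M S : Finset E} {f : E →ₗ[ℝ] ℝ} {c : ℝ} (h : IsArgmax M S f c) :
    S ⊆ M := by
  rw [h.2.2]; exact Finset.filter_subset _ _

lemma IsArgmax.eq_c {M S : Finset E} {f : E →ₗ[ℝ] ℝ} {c : ℝ} (h : IsArgmax M S f c)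
    {u : E} (hu : u ∈ S) : f u = c := by
  rw [h.2.2] at hu; exact (Finset.mem_filter.1 hu).2

lemma argmax_hull {M S : Finset E} {f : E →ₗ[ℝ] ℝ} {c : ℝ} (h : IsArgmax M S f c) :
    {x ∈ convexHull ℝ (M : Set E) | f x = c} = convexHull ℝ (S : Set E) := by
  obtain ⟨hne, hle, hfil⟩ := h
  apply Set.Subset.antisymm
  · rintro x ⟨hxM, hxc⟩
    rw [Finset.convexHull_eq] at hxM
    obtain ⟨w, hw0, hw1, hx⟩ := hxM
    have hfx : f x = ∑ y ∈ M, w y * f y := by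
      rw [← hx, Finset.centerMass_eq_of_sum_1 _ _ hw1, map_sum]
      simp [smul_eq_mul]
    have hterm : ∀ y ∈ M, w y * f y ≤ w y * c := fun y hy =>
      mul_le_mul_of_nonneg_left (hle y hy) (hw0 y hy)
    have hsum : ∑ y ∈ M, w y * f y = ∑ y ∈ M, w y * c := by
      rw [← hfx, ← Finset.sum_mul, hw1, one_mul, hxc]
    have heq : ∀ y ∈ M, w y * f y = w y * c :=
      (Finset.sum_eq_sum_iff_of_le hterm).1 hsum
    have hmem : ∀ y ∈ M, w y ≠ 0 → y ∈ S := by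
      intro y hy hwy
      rw [hfil, Finset.mem_filter]
      exact ⟨hy, mul_left_cancel₀ hwy (heq y hy)⟩
    rw [← hx, ← Finset.centerMass_filter_ne_zero (z := id)]
    apply Finset.centerMass_mem_convexHull
    · intro i hi; exact hw0 i (Finset.mem_of_mem_filter _ hi)
    · rw [Finset.sum_filter_ne_zero, hw1]; norm_num
    · intro i hi
      rw [Finset.mem_filter] at hi
      exact hmem i hi.1 hi.2
  · intro x hx
    have hSM : (S : Set E) ⊆ (M : Set E) := by
      intro y hy; rw [hfil] at hy; exact Finset.mem_of_mem_filter _ hy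
    refine ⟨convexHull_mono hSM hx, ?_⟩
    refine hull_le_hyperplane (fun u hu => ?_) x hx
    rw [hfil] at hu
    exact (Finset.mem_filter.1 hu).2

/-- A linear functional constant on a set kills its vectorSpan. -/
lemma const_kills_vectorSpan {s : Set E} {f : E →ₗ[ℝ] ℝ} (h : ∀ a ∈ s, ∀ b ∈ s, f a = f b) :
    vectorSpan ℝ s ≤ LinearMap.ker f := by
  rw [vectorSpan_def, Submodule.span_le]
  rintro x hx
  rw [Set.mem_vsub] at hx
  obtain ⟨a, ha, b, hb, rfl⟩ := hx
  simp only [SetLike.mem_coe, LinearMap.mem_ker, vsub_eq_sub, map_sub]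
  rw [h a ha b hb, sub_self]

lemma vdim_mono {s t : Set (EuclideanSpace ℝ (Fin N))} (h : s ⊆ t) : vdim s ≤ vdim t :=
  Submodule.finrank_mono (vectorSpan_mono ℝ h)

lemma vdim_insert (s : Set (EuclideanSpace ℝ (Fin N))) (w v : EuclideanSpace ℝ (Fin N))
    (hv : v ∈ s) : vdim (insert w s) ≤ vdim s + 1 := by
  have hle : vectorSpan ℝ (insert w s) ≤ vectorSpan ℝ s ⊔ Submodule.span ℝ {w - v} := by
    rw [vectorSpan_def, Submodule.span_le]
    rintro x hx
    rw [Set.mem_vsub] at hx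
    obtain ⟨a, ha, b, hb, rfl⟩ := hx
    have key : ∀ u ∈ insert w s, u - v ∈ vectorSpan ℝ s ⊔ Submodule.span ℝ {w - v} := by
      rintro u (rfl | hu)
      · exact Submodule.mem_sup_right (Submodule.mem_span_singleton_self _)
      · exact Submodule.mem_sup_left (vsub_mem_vectorSpan ℝ hu hv)
    have hab : a -ᵥ b = (a - v) - (b - v) := by rw [vsub_eq_sub]; abel
    rw [hab]
    exact Submodule.sub_mem _ (key a ha) (key b hb)
  have h1 : vdim (insert w s) ≤
      Module.finrank ℝ ↥(vectorSpan ℝ s ⊔ Submodule.span ℝ {w - v}) :=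
    Submodule.finrank_mono hle
  have h2 : Module.finrank ℝ ↥(vectorSpan ℝ s ⊔ Submodule.span ℝ {w - v}) +
      Module.finrank ℝ ↥(vectorSpan ℝ s ⊓ Submodule.span ℝ {w - v}) =
      Module.finrank ℝ ↥(vectorSpan ℝ s) + Module.finrank ℝ ↥(Submodule.span ℝ {w - v}) :=
    Submodule.finrank_sup_add_finrank_inf_eq _ _
  have h3 : Module.finrank ℝ ↥(Submodule.span ℝ ({w - v} : Set (EuclideanSpace ℝ (Fin N)))) ≤ 1 := by
    rcases eq_or_ne (w - v) 0 with h | h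
    · rw [h, Submodule.span_zero_singleton]; simp
    · rw [finrank_span_singleton h]
  have h4 : vdim s = Module.finrank ℝ ↥(vectorSpan ℝ s) := rfl
  omega

/-- Existence of a rotation functional. -/
lemma exists_rot {M : Finset E} {s : Set E} {v : E} (hv : v ∈ s)
    (hdim : vdim s < vdim (M : Set E)) :
    ∃ ℓ : E →ₗ[ℝ] ℝ, (∀ a ∈ s, ℓ a = ℓ v) ∧ ∃ u ∈ M, ℓ u ≠ ℓ v := by
  set U := vectorSpan ℝ s with hU
  set W := vectorSpan ℝ (M : Set E) with hW
  have hdim' : Module.finrank ℝ ↥U < Module.finrank ℝ ↥W := hdim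
  have hnle : ¬ W ≤ U := fun hle => absurd (Submodule.finrank_mono hle) (by omega)
  -- find p in Uᗮ not orthogonal to W
  have hoo : ¬ (Uᗮ ≤ Wᗮ) := by
    intro hle
    exact hnle (by simpa [Submodule.orthogonal_orthogonal] using Submodule.orthogonal_le hle)
  obtain ⟨p, hpU, hpW⟩ : ∃ p, p ∈ Uᗮ ∧ ¬ p ∈ Wᗮ := by
    by_contra h
    push_neg at h
    exact hoo h
  refine ⟨(innerSL ℝ p).toLinearMap, ?_, ?_⟩
  · intro a ha
    have hav : a - v ∈ U := by
      have := vsub_mem_vectorSpan ℝ ha hv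
      rwa [vsub_eq_sub, ← hU] at this
    have h0 : (inner ℝ p (a - v) : ℝ) = 0 := (Submodule.mem_orthogonal' U p).1 hpU _ hav
    have h1 : (inner ℝ p a : ℝ) - inner ℝ p v = 0 := by rw [← inner_sub_right]; exact h0
    have h2 : (inner ℝ p a : ℝ) = inner ℝ p v := sub_eq_zero.1 h1
    simpa using h2
  · by_contra hcon
    push_neg at hcon
    apply hpW
    rw [Submodule.mem_orthogonal']
    intro x hx
    have hker : W ≤ LinearMap.ker (innerSL ℝ p).toLinearMap := by
      rw [hW]
      apply const_kills_vectorSpan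
      intro a ha b hb
      have h1 := hcon a ha
      have h2 := hcon b hb
      simp only [ContinuousLinearMap.coe_coe] at h1 h2 ⊢
      rw [h1, h2]
    have := hker hx
    simpa using this

lemma rotate {M S : Finset E} {f ℓ : E →ₗ[ℝ] ℝ} {c : ℝ} {v : E}
    (h : IsArgmax M S f c) (hv : v ∈ S) (hconst : ∀ s ∈ S, ℓ s = ℓ v)
    (hex : ∃ u ∈ M, ℓ v < ℓ u) :
    ∃ t : ℝ, 0 < t ∧
      IsArgmax M (M.filter (fun u => (f + t • ℓ) u = c + t * ℓ v)) (f + t • ℓ) (c + t * ℓ v) ∧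
      S ⊆ M.filter (fun u => (f + t • ℓ) u = c + t * ℓ v) ∧
      ∃ u ∈ M.filter (fun u => (f + t • ℓ) u = c + t * ℓ v), ℓ v < ℓ u := by
  classical
  obtain ⟨hSne, hle, hSfil⟩ := h
  have hvM : v ∈ M := by rw [hSfil] at hv; exact Finset.mem_of_mem_filter _ hv
  have hfv : f v = c := by rw [hSfil, Finset.mem_filter] at hv; exact hv.2
  set T := M.filter (fun u => ℓ v < ℓ u) with hT
  have hTne : T.Nonempty := by
    obtain ⟨u, hu, hlu⟩ := hex
    exact ⟨u, by rw [hT, Finset.mem_filter]; exact ⟨hu, hlu⟩⟩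
  set r : EuclideanSpace ℝ (Fin N) → ℝ := fun u => (c - f u) / (ℓ u - ℓ v) with hr
  set t := (T.image r).min' (hTne.image r) with ht
  have hfund : ∀ u ∈ T, f u < c ∧ ℓ v < ℓ u := by
    intro u hu
    rw [hT, Finset.mem_filter] at hu
    refine ⟨?_, hu.2⟩
    rcases lt_or_eq_of_le (hle u hu.1) with h | h
    · exact h
    · exfalso
      have huS : u ∈ S := by rw [hSfil, Finset.mem_filter]; exact ⟨hu.1, h⟩
      have := hconst u huS
      linarith [hu.2]
  have htpos : 0 < t := by
    rw [ht]
    apply (Finset.lt_min'_iff _ _).2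
    intro y hy
    obtain ⟨u, hu, rfl⟩ := Finset.mem_image.1 hy
    obtain ⟨h1, h2⟩ := hfund u hu
    exact div_pos (by linarith) (by linarith)
  obtain ⟨ustar, hustar, hrstar⟩ : ∃ u ∈ T, r u = t := by
    have := Finset.min'_mem (T.image r) (hTne.image r)
    rw [← ht] at this
    obtain ⟨u, hu, hru⟩ := Finset.mem_image.1 this
    exact ⟨u, hu, hru⟩
  have hbound : ∀ u ∈ M, f u + t * ℓ u ≤ c + t * ℓ v := by
    intro u hu
    rcases le_or_gt (ℓ u) (ℓ v) with h | h
    · have h1 : f u ≤ c := hle u hu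
      nlinarith
    · have huT : u ∈ T := by rw [hT, Finset.mem_filter]; exact ⟨hu, h⟩
      have h1 : t ≤ r u := by
        rw [ht]
        exact Finset.min'_le _ _ (Finset.mem_image_of_mem r huT)
      obtain ⟨h2, h3⟩ := hfund u huT
      rw [hr] at h1
      have h4 : t * (ℓ u - ℓ v) ≤ c - f u := by
        rw [← le_div_iff₀ (by linarith : (0:ℝ) < ℓ u - ℓ v)]
        exact h1
      linarith
  refine ⟨t, htpos, ⟨⟨v, ?_⟩, ?_, rfl⟩, ?_, ⟨ustar, ?_, (hfund ustar hustar).2⟩⟩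
  · rw [Finset.mem_filter]
    refine ⟨hvM, ?_⟩
    simp only [LinearMap.add_apply, LinearMap.smul_apply, smul_eq_mul]
    rw [hfv]
  · intro u hu
    simp only [LinearMap.add_apply, LinearMap.smul_apply, smul_eq_mul]
    exact hbound u hu
  · intro s hs
    rw [Finset.mem_filter]
    have hsM : s ∈ M := by rw [hSfil] at hs; exact Finset.mem_of_mem_filter _ hs
    have hfs : f s = c := by rw [hSfil, Finset.mem_filter] at hs; exact hs.2
    refine ⟨hsM, ?_⟩
    simp only [LinearMap.add_apply, LinearMap.smul_apply, smul_eq_mul]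
    rw [hfs, hconst s hs]
  · rw [Finset.mem_filter]
    have huM : ustar ∈ M := by rw [hT] at hustar; exact Finset.mem_of_mem_filter _ hustar
    refine ⟨huM, ?_⟩
    simp only [LinearMap.add_apply, LinearMap.smul_apply, smul_eq_mul]
    obtain ⟨h2, h3⟩ := hfund ustar hustar
    rw [hr] at hrstar
    have : t * (ℓ ustar - ℓ v) = c - f ustar := by
      rw [← hrstar]
      simp only []
      rw [div_mul_cancel₀]
      linarith
    linarith


lemma IsArgmax.restrict_singleton {M M' : Finset E} {v : E} {f : E →ₗ[ℝ] ℝ} {c : ℝ}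
    (h : IsArgmax M {v} f c) (hM' : M' ⊆ M) (hv : v ∈ M') :
    IsArgmax M' {v} f c := by
  obtain ⟨h1, h2, h3⟩ := h
  refine ⟨⟨v, Finset.mem_singleton_self v⟩, fun u hu => h2 u (hM' hu), ?_⟩
  ext u
  simp only [Finset.mem_singleton, Finset.mem_filter]
  constructor
  · intro he
    refine he ▸ ⟨hv, ?_⟩
    have hvf : v ∈ Finset.filter (fun u => f u = c) M := by
      rw [← h3]; exact Finset.mem_singleton_self v
    exact (Finset.mem_filter.1 hvf).2
  · rintro ⟨huM', hfc⟩
    have : u ∈ ({v} : Finset _) := by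
      rw [h3, Finset.mem_filter]; exact ⟨hM' huM', hfc⟩
    exact Finset.mem_singleton.1 this

lemma perturb {V S T : Finset E} {f g : E →ₗ[ℝ] ℝ} {c e : ℝ}
    (hf : IsArgmax V S f c) (hg : IsArgmax S T g e) :
    ∃ ε : ℝ, 0 < ε ∧ IsArgmax V T (f + ε • g) (c + ε * e) := by
  obtain ⟨hS, hfle, hSfil⟩ := hf
  obtain ⟨hT, hgle, hTfil⟩ := hg
  have hTS : T ⊆ S := by rw [hTfil]; exact Finset.filter_subset _ _
  have hSV : S ⊆ V := by rw [hSfil]; exact Finset.filter_subset _ _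
  -- gap δ
  classical
  set D := V \ S with hD
  obtain ⟨ε, hε, hkey⟩ : ∃ ε : ℝ, 0 < ε ∧ ∀ u ∈ D, f u + ε * g u < c + ε * e := by
    rcases D.eq_empty_or_nonempty with h | h
    · exact ⟨1, one_pos, by simp [h]⟩
    · set δ := (D.image (fun u => c - f u)).min' (h.image _) with hδ
      have hδpos : 0 < δ := by
        rw [hδ]
        apply (Finset.lt_min'_iff _ _).2
        intro y hy
        obtain ⟨u, hu, rfl⟩ := Finset.mem_image.1 hy
        rw [hD, Finset.mem_sdiff] at hu
        have h1 : f u ≤ c := hfle u hu.1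
        have h2 : f u ≠ c := by
          intro hc
          exact hu.2 (by rw [hSfil, Finset.mem_filter]; exact ⟨hu.1, hc⟩)
        have := lt_of_le_of_ne h1 h2
        linarith
      obtain ⟨t0, ht0⟩ := hT
      set Γ := (V.image (fun u => |g u - e|)).max' (Finset.Nonempty.image ⟨t0, hSV (hTS ht0)⟩ _) with hΓ
      have hΓ0 : 0 ≤ Γ := by
        refine le_trans (abs_nonneg (g t0 - e)) ?_
        exact Finset.le_max' _ _ (Finset.mem_image_of_mem (fun u => |g u - e|) (hSV (hTS ht0)))
      refine ⟨δ / (Γ + 1), by positivity, ?_⟩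
      intro u hu
      have h1 : f u ≤ c - δ := by
        have : c - f u ∈ D.image (fun u => c - f u) := Finset.mem_image_of_mem _ hu
        have := Finset.min'_le _ _ this
        rw [← hδ] at this
        linarith
      have h2 : |g u - e| ≤ Γ := by
        refine Finset.le_max' _ _ ?_
        refine Finset.mem_image_of_mem _ ?_
        rw [hD, Finset.mem_sdiff] at hu
        exact hu.1
      have h3 : g u - e ≤ Γ := le_trans (le_abs_self _) h2
      have h4 : δ / (Γ + 1) * (g u - e) ≤ δ / (Γ + 1) * Γ := by
        apply mul_le_mul_of_nonneg_left h3 (by positivity)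
      have h5 : δ / (Γ + 1) * Γ < δ := by
        rw [div_mul_eq_mul_div, div_lt_iff₀ (by linarith)]
        nlinarith
      nlinarith [h4, h5, h1]
  refine ⟨ε, hε, hT, ?_, ?_⟩
  · intro u hu
    simp only [LinearMap.add_apply, LinearMap.smul_apply, smul_eq_mul]
    by_cases huS : u ∈ S
    · have h1 : f u = c := by rw [hSfil, Finset.mem_filter] at huS; exact huS.2
      have h2 : g u ≤ e := hgle u huS
      nlinarith
    · have := hkey u (by rw [hD, Finset.mem_sdiff]; exact ⟨hu, huS⟩)
      linarith
  · ext u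
    simp only [Finset.mem_filter, LinearMap.add_apply, LinearMap.smul_apply, smul_eq_mul]
    constructor
    · intro hu
      rw [hTfil, Finset.mem_filter] at hu
      have huS := hu.1
      have h1 : f u = c := by rw [hSfil, Finset.mem_filter] at huS; exact huS.2
      exact ⟨hSV huS, by rw [h1, hu.2]⟩
    · rintro ⟨huV, heq⟩
      by_cases huS : u ∈ S
      · have h1 : f u = c := by rw [hSfil, Finset.mem_filter] at huS; exact huS.2
        have h2 : g u = e := by
          rw [h1] at heq
          have := mul_left_cancel₀ (ne_of_gt hε) (by linarith : ε * g u = ε * e)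
          exact this
        rw [hTfil, Finset.mem_filter]; exact ⟨huS, h2⟩
      · have := hkey u (by rw [hD, Finset.mem_sdiff]; exact ⟨huV, huS⟩)
        linarith


lemma IsArgmax.const {M S : Finset E} {f : E →ₗ[ℝ] ℝ} {c : ℝ} (h : IsArgmax M S f c) :
    ∀ a ∈ (S : Set E), ∀ b ∈ (S : Set E), f a = f b := by
  intro a ha b hb
  rw [h.eq_c (Finset.mem_coe.1 ha), h.eq_c (Finset.mem_coe.1 hb)]

lemma vdim_strict {S S' : Finset E} {v u : E} {ℓ : E →ₗ[ℝ] ℝ}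
    (hSS : S ⊆ S') (hv : v ∈ S) (hu : u ∈ S')
    (hconst : ∀ a ∈ (S : Set E), ℓ a = ℓ v) (hne : ℓ u ≠ ℓ v) :
    vdim (S : Set E) < vdim (S' : Set E) := by
  have hle : vectorSpan ℝ (S : Set E) ≤ vectorSpan ℝ (S' : Set E) :=
    vectorSpan_mono ℝ (Finset.coe_subset.2 hSS)
  have hmem : u - v ∈ vectorSpan ℝ (S' : Set E) := by
    have := vsub_mem_vectorSpan ℝ (Finset.mem_coe.2 hu) (Finset.mem_coe.2 (hSS hv))
    rwa [vsub_eq_sub] at this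
  have hnotmem : u - v ∉ vectorSpan ℝ (S : Set E) := by
    intro hm
    have hker : vectorSpan ℝ (S : Set E) ≤ LinearMap.ker ℓ := by
      apply const_kills_vectorSpan
      intro a ha b hb
      rw [hconst a ha, hconst b hb]
    have := hker hm
    rw [LinearMap.mem_ker, map_sub, sub_eq_zero] at this
    exact hne this
  have hlt : vectorSpan ℝ (S : Set E) < vectorSpan ℝ (S' : Set E) := by
    refine lt_of_le_of_ne hle ?_
    intro he
    rw [he] at hnotmem
    exact hnotmem hmem
  exact Submodule.finrank_lt_finrank_of_lt hlt

/-- The facet lemma: inside `M`, from the vertex `v` we can climb to a face of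
dimension exactly `vdim M - 1` containing `v` and avoiding `w`. -/
lemma facet_aux {M : Finset E} {v w : E} (hv : v ∈ M) (hw : w ∈ M) :
    ∀ n : ℕ, ∀ (f : E →ₗ[ℝ] ℝ) (c : ℝ) (S : Finset E), IsArgmax M S f c → v ∈ S → f w < c →
      vdim (S : Set E) ≤ vdim (M : Set E) - 1 →
      vdim (M : Set E) - 1 - vdim (S : Set E) ≤ n →
      ∃ (h : E →ₗ[ℝ] ℝ) (c' : ℝ) (S' : Finset E), IsArgmax M S' h c' ∧ v ∈ S' ∧ h w < c' ∧
        vdim (S' : Set E) = vdim (M : Set E) - 1 := by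
  intro n
  induction n with
  | zero =>
    intro f c S hS hvS hfw h1 h2
    exact ⟨f, c, S, hS, hvS, hfw, by omega⟩
  | succ n ih =>
    intro f c S hS hvS hfw h1 h2
    by_cases heq : vdim (S : Set E) = vdim (M : Set E) - 1
    · exact ⟨f, c, S, hS, hvS, hfw, heq⟩
    · have hlt : vdim (S : Set E) < vdim (M : Set E) - 1 := by omega
      -- the rotation functional, constant on `insert w S`
      have hins : vdim (insert w (S : Set E)) ≤ vdim (S : Set E) + 1 :=
        vdim_insert _ w v (Finset.mem_coe.2 hvS)
      have hdins : vdim (insert w (S : Set E)) < vdim (M : Set E) := by omega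
      obtain ⟨ℓ₀, hℓ₀const, u₀, hu₀M, hu₀⟩ :=
        exists_rot (v := v) (Set.mem_insert_of_mem _ (Finset.mem_coe.2 hvS)) hdins
      -- fix the sign
      obtain ⟨ℓ, hℓconst, hℓex⟩ :
          ∃ ℓ : E →ₗ[ℝ] ℝ, (∀ a ∈ insert w (S : Set E), ℓ a = ℓ v) ∧ ∃ u ∈ M, ℓ v < ℓ u := by
        rcases lt_or_gt_of_ne hu₀ with h | h
        · refine ⟨-ℓ₀, fun a ha => by simp [hℓ₀const a ha], u₀, hu₀M, by
            simp only [LinearMap.neg_apply]; linarith⟩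
        · exact ⟨ℓ₀, hℓ₀const, u₀, hu₀M, h⟩
      obtain ⟨t, htpos, hS', hsub, ustar, hustar, hℓustar⟩ :=
        rotate hS hvS (fun s hs => hℓconst s (Set.mem_insert_of_mem _ (Finset.mem_coe.2 hs))) hℓex
      set S' := M.filter (fun u => (f + t • ℓ) u = c + t * ℓ v) with hS'def
      have hvS' : v ∈ S' := hsub hvS
      have hfw' : (f + t • ℓ) w < c + t * ℓ v := by
        simp only [LinearMap.add_apply, LinearMap.smul_apply, smul_eq_mul]
        rw [hℓconst w (Set.mem_insert _ _)]
        nlinarith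
      have hgrow : vdim (S : Set E) < vdim (S' : Set E) :=
        vdim_strict hsub hvS hustar
          (fun a ha => hℓconst a (Set.mem_insert_of_mem _ ha)) (ne_of_gt hℓustar)
      have hS'M : S' ⊆ M := Finset.filter_subset _ _
      have hup : vdim (S' : Set E) ≤ vdim (M : Set E) - 1 := by
        by_contra hcon
        push_neg at hcon
        have hmono : vdim (S' : Set E) ≤ vdim (M : Set E) :=
          vdim_mono (Finset.coe_subset.2 hS'M)
        have hSeq : vdim (S' : Set E) = vdim (M : Set E) := by omega
        have hspan : vectorSpan ℝ (S' : Set E) = vectorSpan ℝ (M : Set E) :=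
          Submodule.eq_of_le_of_finrank_eq (vectorSpan_mono ℝ (Finset.coe_subset.2 hS'M)) hSeq
        have hwv : w - v ∈ vectorSpan ℝ (S' : Set E) := by
          rw [hspan]
          have := vsub_mem_vectorSpan ℝ (Finset.mem_coe.2 hw) (Finset.mem_coe.2 hv)
          rwa [vsub_eq_sub] at this
        have hker : vectorSpan ℝ (S' : Set E) ≤ LinearMap.ker (f + t • ℓ) :=
          const_kills_vectorSpan hS'.const
        have h0 := hker hwv
        rw [LinearMap.mem_ker, map_sub, sub_eq_zero] at h0
        have hvval : (f + t • ℓ) v = c + t * ℓ v := hS'.eq_c hvS'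
        rw [h0, hvval] at hfw'
        exact lt_irrefl _ hfw'
      exact ih (f + t • ℓ) (c + t * ℓ v) S' hS' hvS' hfw' hup (by omega)

lemma facet {M : Finset E} {v w : E} (hv : v ∈ M) (hw : w ∈ M) (hwv : w ≠ v)
    {g : E →ₗ[ℝ] ℝ} {cg : ℝ} (hg : IsArgmax M {v} g cg) :
    ∃ (h : E →ₗ[ℝ] ℝ) (c : ℝ) (S : Finset E), IsArgmax M S h c ∧ v ∈ S ∧ h w < c ∧
      vdim (S : Set E) = vdim (M : Set E) - 1 := by
  have hgw : g w < cg := by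
    rcases lt_or_eq_of_le (hg.2.1 w hw) with h | h
    · exact h
    · exfalso
      have : w ∈ ({v} : Finset _) := by rw [hg.2.2, Finset.mem_filter]; exact ⟨hw, h⟩
      exact hwv (Finset.mem_singleton.1 this)
  have hsing : vdim (({v} : Finset (EuclideanSpace ℝ (Fin N))) : Set (EuclideanSpace ℝ (Fin N))) = 0 := by
    rw [Finset.coe_singleton]
    unfold vdim
    rw [vectorSpan_singleton]
    exact finrank_bot ℝ _
  exact facet_aux hv hw (vdim (M : Set E)) g cg {v}
    hg (Finset.mem_singleton_self v) hgw (by omega) (by omega)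

lemma argmax_isFace {M S : Finset E} {f : E →ₗ[ℝ] ℝ} {c : ℝ} (h : IsArgmax M S f c) :
    IsFace (convexHull ℝ (M : Set E)) (convexHull ℝ (S : Set E)) :=
  ⟨f, c, hull_le_halfspace h.2.1, (argmax_hull h).symm⟩

lemma pdim_hull (S : Finset E) :
    pdim (convexHull ℝ (S : Set E)) = vdim (S : Set E) := by
  unfold pdim vdim
  rw [affineSpan_convexHull, direction_affineSpan]

/-- Every vertex of `P = conv V` is an element of `V`, with an exposing functional. -/
lemma vertex_argmax {V : Finset E} {x : E} (hx : IsFace (convexHull ℝ (V : Set E)) {x}) :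
    x ∈ V ∧ ∃ (g : E →ₗ[ℝ] ℝ) (c : ℝ), IsArgmax V {x} g c := by
  classical
  obtain ⟨g, c, hle, heq⟩ := hx
  have hxP : x ∈ convexHull ℝ (V : Set E) ∧ g x = c := by
    have : x ∈ ({x} : Set _) := rfl
    rw [heq] at this
    exact this
  have hVne : V.Nonempty := by
    rcases V.eq_empty_or_nonempty with h | h
    · exfalso
      rw [h] at hxP
      simpa using hxP.1
    · exact h
  set A := V.filter (fun u => g u = c) with hA
  have hAne : A.Nonempty := by
    by_contra hcon
    rw [Finset.not_nonempty_iff_eq_empty] at hcon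
    have hstrict : ∀ u ∈ V, g u < c := by
      intro u hu
      rcases lt_or_eq_of_le (hle u (subset_convexHull ℝ _ hu)) with h | h
      · exact h
      · exfalso
        have : u ∈ A := by rw [hA, Finset.mem_filter]; exact ⟨hu, h⟩
        rw [hcon] at this
        exact absurd this (Finset.notMem_empty u)
    set c' := (V.image g).max' (hVne.image g) with hc'
    have hc'lt : c' < c := by
      rw [hc']
      apply (Finset.max'_lt_iff _ _).2
      intro y hy
      obtain ⟨u, hu, rfl⟩ := Finset.mem_image.1 hy
      exact hstrict u hu
    have : g x ≤ c' := by
      refine hull_le_halfspace (fun u hu => ?_) x hxP.1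
      exact Finset.le_max' _ _ (Finset.mem_image_of_mem g hu)
    linarith [hxP.2]
  have hargA : IsArgmax V A g c :=
    ⟨hAne, fun u hu => hle u (subset_convexHull ℝ _ hu), rfl⟩
  have hhull : convexHull ℝ (A : Set E) = {x} := by
    rw [← argmax_hull hargA, ← heq]
  have hAx : A = {x} := by
    have hsub : (A : Set E) ⊆ {x} := by
      rw [← hhull]
      exact subset_convexHull ℝ _
    obtain ⟨a, ha⟩ := hAne
    have hax : a = x := hsub ha
    apply Finset.eq_singleton_iff_unique_mem.2
    exact ⟨hax ▸ ha, fun y hy => hsub hy⟩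
  constructor
  · have : x ∈ A := hAx ▸ Finset.mem_singleton_self x
    exact Finset.mem_of_mem_filter _ this
  · exact ⟨g, c, hAx ▸ hargA⟩

lemma vdim_singleton (x : EuclideanSpace ℝ (Fin N)) : vdim ({x} : Set (EuclideanSpace ℝ (Fin N))) = 0 := by
  unfold vdim
  rw [vectorSpan_singleton]
  exact finrank_bot ℝ _


theorem stmt3 {N : ℕ} (P : Set (EuclideanSpace ℝ (Fin N))) (d m : ℕ)
    (hP : IsPolytope P) (hdim : pdim P = d)
    (v : Fin m → EuclideanSpace ℝ (Fin N)) (hv : Function.Injective v)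
    (hvert : ∀ i, v i ∈ vertexSet P) (hm : m ≤ d) :
    ∃ F : Fin m → Set (EuclideanSpace ℝ (Fin N)),
      ∀ i : Fin m, IsFace P (F i) ∧ pdim (F i) = d - (i : ℕ) ∧ v i ∈ F i ∧
        ∀ j : Fin m, j < i → v j ∉ F i := by
  classical
  obtain ⟨V, rfl⟩ := hP
  have hvV : ∀ i, v i ∈ V := fun i => (vertex_argmax (hvert i)).1
  have hgex := fun i => (vertex_argmax (hvert i)).2
  choose g cg hg using hgex
  rw [pdim_hull] at hdim
  have key : ∀ (i : Fin m) (t : ℕ), t ≤ (i : ℕ) →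
      ∃ (H : EuclideanSpace ℝ (Fin N) →ₗ[ℝ] ℝ) (c : ℝ) (S : Finset (EuclideanSpace ℝ (Fin N))),
        IsArgmax V S H c ∧ v i ∈ S ∧
        vdim (S : Set (EuclideanSpace ℝ (Fin N))) = d - t ∧
        ∀ j : Fin m, (j : ℕ) < t → v j ∉ convexHull ℝ (S : Set (EuclideanSpace ℝ (Fin N))) := by
    intro i t
    induction t with
    | zero =>
      intro _
      refine ⟨0, 0, V, ⟨⟨v i, hvV i⟩, by simp, ?_⟩, hvV i, by simpa using hdim,
        fun j hj => absurd hj (Nat.not_lt_zero _)⟩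
      refine (Finset.filter_true_of_mem (fun u _ => ?_)).symm
      simp
    | succ t ih =>
      intro hti
      obtain ⟨H, c, S, hS, hviS, hSdim, havoid⟩ := ih (by omega)
      have hi : (i : ℕ) < m := i.isLt
      have hlow : 2 ≤ d - t := by omega
      have hSV : S ⊆ V := hS.subset
      have hrestr : IsArgmax S {v i} (g i) (cg i) := (hg i).restrict_singleton hSV hviS
      have hjt : t < m := by omega
      set jt : Fin m := ⟨t, hjt⟩ with hjtdef
      have hstep : ∃ (h : EuclideanSpace ℝ (Fin N) →ₗ[ℝ] ℝ) (c' : ℝ)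
          (S' : Finset (EuclideanSpace ℝ (Fin N))), IsArgmax S S' h c' ∧ v i ∈ S' ∧
          vdim (S' : Set (EuclideanSpace ℝ (Fin N))) = d - (t + 1) ∧
          v jt ∉ convexHull ℝ (S' : Set (EuclideanSpace ℝ (Fin N))) := by
        by_cases hwS : v jt ∈ S
        · have hne : v jt ≠ v i := by
            intro h
            have := hv h
            rw [hjtdef] at this
            have : t = (i : ℕ) := congrArg Fin.val this
            omega
          obtain ⟨h, c', S', hS', hvS', hhw, hdim'⟩ := facet hviS hwS hne hrestr
          refine ⟨h, c', S', hS', hvS', by rw [hdim', hSdim]; omega, ?_⟩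
          intro hmem
          have : h (v jt) = c' :=
            hull_le_hyperplane (fun u hu => hS'.eq_c (Finset.mem_coe.1 hu)) _ hmem
          linarith
        · have hex : ∃ w' ∈ S, w' ≠ v i := by
            by_contra hcon
            push_neg at hcon
            have hsub : (S : Set (EuclideanSpace ℝ (Fin N))) ⊆ {v i} := by
              intro a ha
              exact hcon a (Finset.mem_coe.1 ha)
            have := vdim_mono hsub
            rw [vdim_singleton, hSdim] at this
            omega
          obtain ⟨w', hw'S, hw'ne⟩ := hex
          obtain ⟨h, c', S', hS', hvS', hhw, hdim'⟩ := facet hviS hw'S hw'ne hrestr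
          refine ⟨h, c', S', hS', hvS', by rw [hdim', hSdim]; omega, ?_⟩
          intro hmem
          have hmemS : v jt ∈ convexHull ℝ (S : Set (EuclideanSpace ℝ (Fin N))) :=
            convexHull_mono (Finset.coe_subset.2 hS'.subset) hmem
          have hHval : H (v jt) = c :=
            hull_le_hyperplane (fun u hu => hS.eq_c (Finset.mem_coe.1 hu)) _ hmemS
          have : v jt ∈ S := by
            rw [hS.2.2, Finset.mem_filter]
            exact ⟨hvV jt, hHval⟩
          exact hwS this
      obtain ⟨h, c', S', hS', hvS', hdim', havoidt⟩ := hstep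
      obtain ⟨ε, hε, hPerturb⟩ := perturb hS hS'
      refine ⟨H + ε • h, c + ε * c', S', hPerturb, hvS', hdim', ?_⟩
      intro j hj
      rcases Nat.lt_or_ge (j : ℕ) t with hjt' | hjt'
      · intro hmem
        exact havoid j hjt' (convexHull_mono (Finset.coe_subset.2 hS'.subset) hmem)
      · have hjeq : (j : ℕ) = t := by omega
        have : j = jt := Fin.ext hjeq
        rw [this]
        exact havoidt
  have main : ∀ i : Fin m, ∃ F, IsFace (convexHull ℝ (V : Set (EuclideanSpace ℝ (Fin N)))) F ∧
      pdim F = d - (i : ℕ) ∧ v i ∈ F ∧ ∀ j : Fin m, j < i → v j ∉ F := by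
    intro i
    obtain ⟨H, c, S, hS, hviS, hSdim, havoid⟩ := key i i le_rfl
    refine ⟨convexHull ℝ (S : Set (EuclideanSpace ℝ (Fin N))), argmax_isFace hS, ?_,
      subset_convexHull ℝ _ (Finset.mem_coe.2 hviS), ?_⟩
    · rw [pdim_hull, hSdim]
    · intro j hj
      exact havoid j (Fin.lt_def.1 hj)
  choose F hF using main
  exact ⟨F, hF⟩
end

section
/- Let P be a d-dimensional polytope and {v_1, ..., v_m} a set of m ≤ d distinct vertices of P. Then the number of k-dimensional faces of P containing at least one of the v_i is at least Σ_{i=1}^{m} C(d-i+1, k). -/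
open Set

section AuxBase
variable {N : ℕ}

local notation "E" => EuclideanSpace ℝ (Fin N)

lemma isFace_subset {P F : Set E} (h : IsFace P F) : F ⊆ P := by
  obtain ⟨f, c, _, rfl⟩ := h; exact fun x hx => hx.1

lemma isFace_self (P : Set E) : IsFace P P :=
  ⟨0, 0, fun x _ => le_refl 0, by ext x; simp⟩

lemma isFace_convex {P F : Set E} (hP : Convex ℝ P) (h : IsFace P F) : Convex ℝ F := by
  obtain ⟨f, c, _, rfl⟩ := h
  have : {x ∈ P | f x = c} = P ∩ {x | f x = c} := rfl
  rw [this]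
  exact hP.inter (convex_hyperplane (f := fun x => f x) ⟨f.map_add, f.map_smul⟩ c)

lemma mem_face_of_pos_weight {V : Finset E} {F : Set E} (hF : IsFace (convexHull ℝ ↑V) F)
    {w : E → ℝ} (h0 : ∀ y ∈ V, 0 ≤ w y) (h1 : ∑ y ∈ V, w y = 1)
    {x : E} (hx : ∑ y ∈ V, w y • y = x) (hxF : x ∈ F) {z : E} (hz : z ∈ V) (hwz : 0 < w z) :
    z ∈ F := by
  obtain ⟨f, c, hfc, rfl⟩ := hF
  obtain ⟨hxP, hfx⟩ := hxF
  have hfy : ∀ y ∈ V, f y ≤ c := fun y hy => hfc y (subset_convexHull ℝ _ hy)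
  have hsum : ∑ y ∈ V, w y * (c - f y) = 0 := by
    have : f x = ∑ y ∈ V, w y * f y := by
      rw [← hx, map_sum]; simp [mul_comm]
    simp only [mul_sub, Finset.sum_sub_distrib, ← Finset.sum_mul, h1, one_mul, ← this, hfx]
    ring
  have hall := (Finset.sum_eq_zero_iff_of_nonneg
    (fun y hy => mul_nonneg (h0 y hy) (sub_nonneg.2 (hfy y hy)))).1 hsum
  have hz' := hall z hz
  have : f z = c := by
    rcases mul_eq_zero.1 hz' with h | h
    · exact absurd h (ne_of_gt hwz)
    · linarith [sub_eq_zero.1 h]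
  exact ⟨subset_convexHull ℝ _ hz, this⟩

lemma face_eq_convexHull_inter {V : Finset E} {F : Set E} (hF : IsFace (convexHull ℝ ↑V) F) :
    F = convexHull ℝ (↑V ∩ F) := by
  classical
  apply Subset.antisymm
  · intro x hx
    obtain ⟨w, h0, h1, hx'⟩ := Finset.mem_convexHull'.1 (isFace_subset hF hx)
    set V' : Finset E := V.filter (fun y => 0 < w y) with hV'
    have hsub : ↑V' ⊆ ↑V ∩ F := by
      intro z hz
      simp only [hV', Finset.coe_filter, mem_setOf_eq] at hz
      exact ⟨hz.1, mem_face_of_pos_weight hF h0 h1 hx' hx hz.1 hz.2⟩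
    have hzero : ∀ y ∈ V, y ∉ V' → w y = 0 := by
      intro y hy hy'
      simp only [hV', Finset.mem_filter, hy, true_and, not_lt] at hy'
      exact le_antisymm hy' (h0 y hy)
    have hx'' : x ∈ convexHull ℝ (↑V' : Set E) := by
      apply Finset.mem_convexHull'.2 ⟨w, fun y hy => h0 y (Finset.filter_subset _ _ hy), ?_, ?_⟩
      · rw [← h1]; exact Finset.sum_subset (Finset.filter_subset _ _)
          (fun y hy hy' => hzero y hy hy')
      · rw [← hx']; exact Finset.sum_subset (Finset.filter_subset _ _)
          (fun y hy hy' => by rw [hzero y hy hy', zero_smul])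
    exact convexHull_mono hsub hx''
  · exact convexHull_min inter_subset_right (isFace_convex (convex_convexHull ℝ _) hF)

lemma faces_finite (V : Finset E) : {F : Set E | IsFace (convexHull ℝ ↑V) F}.Finite := by
  classical
  have hinj : InjOn (fun F => V.filter (fun y => y ∈ F)) {F : Set E | IsFace (convexHull ℝ ↑V) F} := by
    intro F hF G hG hFG
    have h1 : (↑(V.filter (fun y => y ∈ F)) : Set E) = ↑V ∩ F := by ext y; simp [Finset.mem_filter]
    have h2 : (↑(V.filter (fun y => y ∈ G)) : Set E) = ↑V ∩ G := by ext y; simp [Finset.mem_filter]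
    simp only at hFG
    rw [face_eq_convexHull_inter hF, face_eq_convexHull_inter hG, ← h1, ← h2, hFG]
  have himg : (fun F => V.filter (fun y => y ∈ F)) '' {F : Set E | IsFace (convexHull ℝ ↑V) F} ⊆
      ↑V.powerset := by
    rintro S ⟨F, _, rfl⟩
    simp only [Finset.mem_coe, Finset.mem_powerset]
    exact Finset.filter_subset _ _
  exact Set.Finite.of_finite_image ((V.powerset.finite_toSet).subset himg) hinj

lemma pdim_convexHull (s : Set E) :
    pdim (convexHull ℝ s) = Module.finrank ℝ (vectorSpan ℝ s) := by
  rw [pdim, ← direction_affineSpan, affineSpan_convexHull s]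

lemma pdim_singleton (x : E) : pdim {x} = 0 := by
  rw [pdim, direction_affineSpan, vectorSpan_singleton, finrank_bot ℝ _]

lemma vertex_mem_generators {V : Finset E} {u : E} (hu : u ∈ vertexSet (convexHull ℝ ↑V)) :
    u ∈ V := by
  have h := face_eq_convexHull_inter hu
  by_contra hc
  have he : (↑V ∩ {u} : Set E) = ∅ := by
    ext y; simp only [mem_inter_iff, mem_singleton_iff, mem_empty_iff_false, iff_false]
    rintro ⟨hy, rfl⟩; exact hc hy
  rw [he, convexHull_empty] at h
  exact (singleton_nonempty u).ne_empty h

lemma extremePoint_mem_vertexSet {V : Finset E} {x : E}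
    (hx : x ∈ extremePoints ℝ (convexHull ℝ (↑V : Set E))) :
    x ∈ vertexSet (convexHull ℝ ↑V) := by
  classical
  have hxV : x ∈ V := extremePoints_convexHull_subset hx
  set P := convexHull ℝ (↑V : Set E) with hP
  set V' := V.erase x with hV'
  by_cases hV'e : V' = ∅
  · have hVx : V = {x} := by
      ext y; simp only [Finset.mem_singleton]
      constructor
      · intro hy; by_contra hne
        exact (Finset.notMem_empty y) (hV'e ▸ (Finset.mem_erase.2 ⟨hne, hy⟩))
      · rintro rfl; exact hxV
    refine ⟨0, 0, fun y _ => le_refl 0, ?_⟩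
    rw [hP, hVx]
    ext y
    simp [convexHull_singleton]
  · have hxV' : x ∉ convexHull ℝ (↑V' : Set E) := by
      intro hmem
      have hsub : (↑V' : Set E) ⊆ P \ {x} := by
        intro z hz
        obtain ⟨hzx, hzV⟩ := Finset.mem_erase.1 hz
        exact ⟨subset_convexHull ℝ _ hzV, by simpa using hzx⟩
      have hmem2 : x ∈ convexHull ℝ (P \ {x}) := convexHull_mono hsub hmem
      have := ((convex_convexHull ℝ (↑V : Set E)).mem_extremePoints_iff_mem_diff_convexHull_diff).1 hx
      exact this.2 hmem2
    have hclosed : IsClosed (convexHull ℝ (↑V' : Set E)) :=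
      (V'.finite_toSet).isClosed_convexHull ℝ
    obtain ⟨f, c0, hfx, hfb⟩ := geometric_hahn_banach_point_closed
      (convex_convexHull ℝ (↑V' : Set E)) hclosed hxV'
    set φ : E →ₗ[ℝ] ℝ := -f.toLinearMap with hφ
    have hφx : ∀ z ∈ V', φ z < φ x := by
      intro z hz
      have h1 := hfb z (subset_convexHull ℝ _ hz)
      have h2 : φ z = -(f z) := rfl
      have h3 : φ x = -(f x) := rfl
      rw [h2, h3]; linarith
    have hφP : ∀ y ∈ P, φ y ≤ φ x := by
      have : (↑V : Set E) ⊆ {y | φ y ≤ φ x} := by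
        intro z hz
        simp only [mem_setOf_eq]
        rcases eq_or_ne z x with rfl | hne
        · exact le_refl (φ z)
        · exact le_of_lt (hφx z (Finset.mem_erase.2 ⟨hne, hz⟩))
      intro y hy
      have hconv : Convex ℝ {y : E | φ y ≤ φ x} :=
        convex_halfSpace_le ⟨φ.map_add, φ.map_smul⟩ _
      exact convexHull_min this hconv hy
    refine ⟨φ, φ x, hφP, ?_⟩
    have hface : IsFace P {y ∈ P | φ y = φ x} := ⟨φ, φ x, hφP, rfl⟩
    have heq := face_eq_convexHull_inter hface
    have hVF : (↑V ∩ {y ∈ P | φ y = φ x} : Set E) = {x} := by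
      ext z
      simp only [mem_inter_iff, mem_setOf_eq, mem_singleton_iff]
      constructor
      · rintro ⟨hzV, _, hzφ⟩
        by_contra hne
        exact absurd hzφ (ne_of_lt (hφx z (Finset.mem_erase.2 ⟨hne, hzV⟩)))
      · rintro rfl
        exact ⟨hxV, subset_convexHull ℝ _ hxV, rfl⟩
    rw [heq, hVF, convexHull_singleton]

lemma exists_many_vertices {V : Finset E} {d : ℕ}
    (hPne : (convexHull ℝ (↑V : Set E)).Nonempty)
    (hdim : pdim (convexHull ℝ (↑V : Set E)) = d) :
    ∃ S : Finset E, S.card = d + 1 ∧ ↑S ⊆ vertexSet (convexHull ℝ (↑V : Set E)) := by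
  classical
  set P := convexHull ℝ (↑V : Set E) with hP
  set X : Set E := extremePoints ℝ P with hX
  have hXV : X ⊆ ↑V := extremePoints_convexHull_subset
  have hXfin : X.Finite := (V.finite_toSet).subset hXV
  have hcompact : IsCompact P := (V.finite_toSet).isCompact_convexHull ℝ
  have hPX : convexHull ℝ X = P := by
    have h1 := closure_convexHull_extremePoints hcompact (convex_convexHull ℝ _)
    rwa [IsClosed.closure_eq (hXfin.isClosed_convexHull ℝ)] at h1
  have hspan : Module.finrank ℝ (vectorSpan ℝ X) = d := by
    have : pdim (convexHull ℝ X) = d := by rw [hPX]; exact hdim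
    rwa [pdim_convexHull] at this
  -- X has at least d + 1 elements
  have hcard : d + 1 ≤ hXfin.toFinset.card := by
    by_contra hlt
    push_neg at hlt
    rcases Finset.eq_empty_or_nonempty hXfin.toFinset with he | ⟨p, hp⟩
    · have hXe : X = ∅ := by simpa using he
      rw [hXe, convexHull_empty] at hPX
      exact hPne.ne_empty hPX.symm
    · have hcard' : hXfin.toFinset.card = (hXfin.toFinset.card - 1) + 1 :=
        (Nat.succ_pred_eq_of_pos (Finset.card_pos.2 ⟨p, hp⟩)).symm
      have hle := finrank_vectorSpan_image_finset_le ℝ (id : E → E) hXfin.toFinset hcard'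
      rw [Finset.image_id] at hle
      have : (hXfin.toFinset : Set E) = X := hXfin.coe_toFinset
      rw [this, hspan] at hle
      omega
  obtain ⟨S, hS, hScard⟩ := Finset.exists_subset_card_eq hcard
  refine ⟨S, hScard, ?_⟩
  intro z hz
  have : z ∈ X := by
    have := hS hz
    rwa [Set.Finite.mem_toFinset] at this
  exact extremePoint_mem_vertexSet this

section SEC

variable (f₀ : EuclideanSpace ℝ (Fin N) →ₗ[ℝ] ℝ) (u : EuclideanSpace ℝ (Fin N))
  (S : Finset (EuclideanSpace ℝ (Fin N))) (c'' : ℝ)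

/-- the crossing point of the segment `[u,z]` with the level set `f₀ = c''`. -/
noncomputable def crossPt (f₀ : EuclideanSpace ℝ (Fin N) →ₗ[ℝ] ℝ)
    (u : EuclideanSpace ℝ (Fin N)) (c'' : ℝ) (z : EuclideanSpace ℝ (Fin N)) :
    EuclideanSpace ℝ (Fin N) :=
  u + ((f₀ u - c'') / (f₀ u - f₀ z)) • (z - u)

noncomputable local instance : DecidableEq (EuclideanSpace ℝ (Fin N)) := Classical.decEq _

variable {f₀ u S c''} 

lemma crossPt_t_pos (hcc : c'' < f₀ u) (hS : ∀ z ∈ S, f₀ z < c'') {z : E} (hz : z ∈ S) :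
    0 < (f₀ u - c'') / (f₀ u - f₀ z) := by
  have h1 := hS z hz
  apply div_pos <;> linarith

lemma crossPt_t_le_one (hcc : c'' < f₀ u) (hS : ∀ z ∈ S, f₀ z < c'') {z : E} (hz : z ∈ S) :
    (f₀ u - c'') / (f₀ u - f₀ z) ≤ 1 := by
  have h1 := hS z hz
  rw [div_le_one (by linarith)]
  linarith

lemma f₀_crossPt (hcc : c'' < f₀ u) (hS : ∀ z ∈ S, f₀ z < c'') {z : E} (hz : z ∈ S) : f₀ (crossPt f₀ u c'' z) = c'' := by
  have h1 := hS z hz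
  have hne : f₀ u - f₀ z ≠ 0 := by linarith
  simp only [crossPt, map_add, map_smul, map_sub, smul_eq_mul]
  field_simp
  ring

lemma crossPt_eq_combo (z : E) :
    crossPt f₀ u c'' z = (1 - (f₀ u - c'') / (f₀ u - f₀ z)) • u
      + ((f₀ u - c'') / (f₀ u - f₀ z)) • z := by
  simp only [crossPt, smul_sub, sub_smul, one_smul]
  abel

lemma crossPt_mem_segment (hcc : c'' < f₀ u) (hS : ∀ z ∈ S, f₀ z < c'') {z : E} (hz : z ∈ S) :
    crossPt f₀ u c'' z ∈ segment ℝ u z := by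
  rw [crossPt_eq_combo]
  refine ⟨1 - (f₀ u - c'') / (f₀ u - f₀ z), (f₀ u - c'') / (f₀ u - f₀ z), ?_, ?_, by ring, rfl⟩
  · have := crossPt_t_le_one hcc hS hz; linarith
  · exact le_of_lt (crossPt_t_pos hcc hS hz)

lemma u_not_mem_S (hcc : c'' < f₀ u) (hS : ∀ z ∈ S, f₀ z < c'') : u ∉ S := fun h => absurd (hS u h) (by linarith)

/-- The section of a polytope `conv (insert u S)` at level `c''` just below the
apex `u` is the convex hull of the crossing points. -/
lemma section_eq (hcc : c'' < f₀ u) (hS : ∀ z ∈ S, f₀ z < c'') :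
    convexHull ℝ (insert u ↑S : Set E) ∩ {x | f₀ x = c''}
      = convexHull ℝ ↑(S.image (crossPt f₀ u c'')) := by
  classical
  apply Subset.antisymm
  · rintro x ⟨hx, hfx⟩
    simp only [mem_setOf_eq] at hfx
    have hins : (insert u ↑S : Set E) = ↑(insert u S) := by simp
    rw [hins] at hx
    obtain ⟨w, h0, h1, hxx⟩ := Finset.mem_convexHull'.1 hx
    have huS := u_not_mem_S hcc hS
    rw [Finset.sum_insert huS] at h1 hxx
    set t : E → ℝ := fun z => (f₀ u - c'') / (f₀ u - f₀ z) with ht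
    set ν : E → ℝ := fun z => w z * (f₀ u - f₀ z) / (f₀ u - c'') with hν
    have hνnn : ∀ z ∈ S, 0 ≤ ν z := by
      intro z hz
      have := hS z hz
      apply div_nonneg (mul_nonneg (h0 z (Finset.mem_insert_of_mem hz)) (by linarith)) (by linarith)
    have hkey : ∑ z ∈ S, w z * (f₀ u - f₀ z) = f₀ u - c'' := by
      have hfx' : w u * f₀ u + ∑ z ∈ S, w z * f₀ z = c'' := by
        rw [← hfx, ← hxx]
        simp only [map_add, map_smul, map_sum, smul_eq_mul]
      have : ∑ z ∈ S, w z * (f₀ u - f₀ z) = (∑ z ∈ S, w z) * f₀ u - ∑ z ∈ S, w z * f₀ z := by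
        rw [Finset.sum_mul, ← Finset.sum_sub_distrib]
        congr 1; ext z; ring
      rw [this]
      have h1' : ∑ z ∈ S, w z = 1 - w u := by linarith
      rw [h1']
      linarith
    have hνsum : ∑ z ∈ S, ν z = 1 := by
      have hne : f₀ u - c'' ≠ 0 := by linarith
      simp only [hν]
      rw [← Finset.sum_div, hkey, div_self hne]
    have hνt : ∀ z ∈ S, ν z * t z = w z := by
      intro z hz
      have h2 := hS z hz
      have hA : f₀ u - f₀ z ≠ 0 := by linarith
      have hB : f₀ u - c'' ≠ 0 := by linarith
      simp only [hν, ht]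
      field_simp
    have hxsum : ∑ z ∈ S, ν z • crossPt f₀ u c'' z = x := by
      have : ∀ z ∈ S, ν z • crossPt f₀ u c'' z = ν z • u + w z • z - w z • u := by
        intro z hz
        rw [crossPt, smul_add, smul_smul, hνt z hz, smul_sub]
        abel
      rw [Finset.sum_congr rfl this]
      rw [Finset.sum_sub_distrib, Finset.sum_add_distrib, ← Finset.sum_smul, ← Finset.sum_smul,
        hνsum, one_smul]
      have hsw : ∑ z ∈ S, w z = 1 - w u := by linarith
      rw [hsw, ← hxx, sub_smul, one_smul]
      abel
    rw [← hxsum]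
    have := S.centerMass_mem_convexHull (w := ν) (z := crossPt f₀ u c'')
      (fun z hz => hνnn z hz) (by rw [hνsum]; norm_num)
      (fun z hz => Finset.mem_coe.2 (Finset.mem_image_of_mem _ hz))
    rwa [Finset.centerMass_eq_of_sum_1 _ _ hνsum] at this
  · apply convexHull_min
    · rintro y hy
      simp only [Finset.coe_image, mem_image, Finset.mem_coe] at hy
      obtain ⟨z, hz, rfl⟩ := hy
      constructor
      · have hseg := crossPt_mem_segment hcc hS hz
        have : segment ℝ u z ⊆ convexHull ℝ (insert u ↑S : Set E) := by
          rw [← convexHull_pair]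
          apply convexHull_mono
          intro y hy
          rcases hy with rfl | rfl
          · exact mem_insert _ _
          · exact mem_insert_of_mem _ (by simpa using hz)
        exact this hseg
      · exact f₀_crossPt hcc hS hz
    · exact ((convex_convexHull ℝ _).inter
        (convex_hyperplane ⟨f₀.map_add, f₀.map_smul⟩ c''))

end SEC


noncomputable local instance inst_s4 : DecidableEq (EuclideanSpace ℝ (Fin N)) := Classical.decEq _

variable {f₀ : EuclideanSpace ℝ (Fin N) →ₗ[ℝ] ℝ} {u : EuclideanSpace ℝ (Fin N)}
  {S : Finset (EuclideanSpace ℝ (Fin N))} {c'' : ℝ}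

lemma crossPt_sub (z : E) :
    crossPt f₀ u c'' z - u = ((f₀ u - c'') / (f₀ u - f₀ z)) • (z - u) := by
  simp [crossPt]

lemma f₀_crossPt' (hcc : c'' < f₀ u) (hS : ∀ z ∈ S, f₀ z < c'') {z : E} (hz : z ∈ S) :
    f₀ (crossPt f₀ u c'' z) = c'' := by
  have h1 := hS z hz
  have hne : f₀ u - f₀ z ≠ 0 := by linarith
  simp only [crossPt, map_add, map_smul, map_sub, smul_eq_mul]
  field_simp
  ring

lemma dim_section (hcc : c'' < f₀ u) (hS : ∀ z ∈ S, f₀ z < c'') (hSne : S.Nonempty) :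
    Module.finrank ℝ (vectorSpan ℝ (insert u ↑S : Set E))
      = Module.finrank ℝ (vectorSpan ℝ (↑(S.image (crossPt f₀ u c'')) : Set E)) + 1 := by
  classical
  obtain ⟨z₁, hz₁⟩ := hSne
  set m : E → E := crossPt f₀ u c'' with hm
  have htne : ∀ z ∈ S, (f₀ u - c'') / (f₀ u - f₀ z) ≠ 0 := by
    intro z hz
    have := hS z hz
    exact div_ne_zero (by linarith) (by linarith)
  set D : Submodule ℝ E := Submodule.span ℝ ((fun z => z - u) '' ↑S) with hD
  have hDeq : vectorSpan ℝ (insert u ↑S : Set E) = D := by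
    rw [vectorSpan_eq_span_vsub_set_right ℝ (mem_insert u ↑S)]
    have himg : (fun x => x -ᵥ u) '' (insert u ↑S) = insert 0 ((fun z => z - u) '' ↑S) := by
      rw [image_insert_eq]
      simp [vsub_eq_sub]
    rw [himg, Submodule.span_insert_zero]
  have hzsubD : ∀ z ∈ S, z - u ∈ D := fun z hz =>
    Submodule.subset_span (mem_image_of_mem _ hz)
  have hmsubD : ∀ z ∈ S, m z - u ∈ D := by
    intro z hz
    rw [hm, crossPt_sub]
    exact Submodule.smul_mem _ _ (hzsubD z hz)
  have hDeq2 : D = Submodule.span ℝ ((fun z => m z - u) '' ↑S) := by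
    apply le_antisymm
    · rw [hD, Submodule.span_le]
      rintro y ⟨z, hz, rfl⟩
      have heq : z - u = ((f₀ u - c'') / (f₀ u - f₀ z))⁻¹ • (m z - u) := by
        rw [hm, crossPt_sub, smul_smul, inv_mul_cancel₀ (htne z hz), one_smul]
      dsimp only
      rw [heq]
      exact Submodule.smul_mem _ _ (Submodule.subset_span (mem_image_of_mem _ hz))
    · rw [Submodule.span_le]
      rintro y ⟨z, hz, rfl⟩
      exact hmsubD z hz
  set B : Submodule ℝ E := vectorSpan ℝ (↑(S.image m) : Set E) with hB
  have hmz₁ : m z₁ ∈ (↑(S.image m) : Set E) := by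
    simp only [Finset.coe_image, mem_image, Finset.mem_coe]
    exact ⟨z₁, hz₁, rfl⟩
  -- B = D ⊓ ker f₀
  have hBle : B ≤ D ⊓ LinearMap.ker f₀ := by
    rw [hB, vectorSpan_eq_span_vsub_set_right ℝ hmz₁, Submodule.span_le]
    rintro y ⟨p, hp, rfl⟩
    simp only [Finset.coe_image, mem_image, Finset.mem_coe] at hp
    obtain ⟨z, hz, rfl⟩ := hp
    constructor
    · have heq : m z -ᵥ m z₁ = (m z - u) - (m z₁ - u) := by
        simp [vsub_eq_sub]
      dsimp only
      rw [heq]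
      exact Submodule.sub_mem _ (hmsubD z hz) (hmsubD z₁ hz₁)
    · simp only [SetLike.mem_coe, LinearMap.mem_ker, vsub_eq_sub, map_sub]
      rw [f₀_crossPt' hcc hS hz, f₀_crossPt' hcc hS hz₁, sub_self]
  have hBge : D ⊓ LinearMap.ker f₀ ≤ B := by
    rintro x ⟨hxD, hxk⟩
    have hxk' : f₀ x = 0 := hxk
    rw [hDeq2] at hxD
    set T : Finset E := S.image (fun z => m z - u) with hT
    have hTc : ((fun z => m z - u) '' ↑S) = ↑T := by
      rw [hT, Finset.coe_image]
    rw [hTc] at hxD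
    obtain ⟨a, -, ha⟩ := Submodule.mem_span_finset.1 hxD
    have hfT : ∀ y ∈ T, f₀ y = c'' - f₀ u := by
      intro y hy
      obtain ⟨z, hz, rfl⟩ := Finset.mem_image.1 hy
      rw [map_sub, f₀_crossPt' hcc hS hz]
    have hasum : ∑ y ∈ T, a y = 0 := by
      have h0 : ∑ y ∈ T, a y * (c'' - f₀ u) = 0 := by
        have hsf : ∑ y ∈ T, a y * f₀ y = 0 := by
          rw [← hxk', ← ha, map_sum]
          apply Finset.sum_congr rfl
          intro y _
          rw [map_smul, smul_eq_mul]
        rw [← hsf]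
        apply Finset.sum_congr rfl
        intro y hy
        rw [hfT y hy]
      rw [← Finset.sum_mul] at h0
      rcases mul_eq_zero.1 h0 with h | h
      · exact h
      · exact absurd h (by intro hh; linarith [sub_eq_zero.1 hh])
    have hx2 : x = ∑ y ∈ T, a y • (y - (m z₁ - u)) := by
      have : ∑ y ∈ T, a y • (y - (m z₁ - u))
          = (∑ y ∈ T, a y • y) - (∑ y ∈ T, a y) • (m z₁ - u) := by
        rw [Finset.sum_smul]
        rw [← Finset.sum_sub_distrib]
        apply Finset.sum_congr rfl
        intro y _
        rw [smul_sub]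
      rw [this, hasum, zero_smul, sub_zero, ha]
    rw [hx2]
    apply Submodule.sum_mem
    intro y hy
    obtain ⟨z, hz, rfl⟩ := Finset.mem_image.1 hy
    apply Submodule.smul_mem
    have heq : (m z - u) - (m z₁ - u) = m z -ᵥ m z₁ := by
      simp [vsub_eq_sub]
    rw [heq]
    apply vsub_mem_vectorSpan
    · simp only [Finset.coe_image, mem_image, Finset.mem_coe]; exact ⟨z, hz, rfl⟩
    · exact hmz₁
  have hBeq : B = D ⊓ LinearMap.ker f₀ := le_antisymm hBle hBge
  -- rank computation
  set φ : D →ₗ[ℝ] ℝ := f₀.comp D.subtype with hφ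
  have hrange : Module.finrank ℝ (LinearMap.range φ) = 1 := by
    have hle : Module.finrank ℝ (LinearMap.range φ) ≤ 1 := by
      have := Submodule.finrank_le (LinearMap.range φ)
      rwa [Module.finrank_self] at this
    have hne : LinearMap.range φ ≠ ⊥ := by
      rw [Submodule.ne_bot_iff]
      refine ⟨φ ⟨z₁ - u, hzsubD z₁ hz₁⟩, LinearMap.mem_range_self _ _, ?_⟩
      have h1 := hS z₁ hz₁
      simp only [hφ, LinearMap.comp_apply, Submodule.coe_subtype, map_sub]
      intro hh
      have : f₀ z₁ = f₀ u := by linarith [sub_eq_zero.1 hh]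
      linarith
    have : Module.finrank ℝ (LinearMap.range φ) ≠ 0 := by
      intro h0
      exact hne (Submodule.finrank_eq_zero.1 h0)
    omega
  have hkermap : (LinearMap.ker φ).map D.subtype = D ⊓ LinearMap.ker f₀ := by
    ext x
    simp only [Submodule.mem_map, LinearMap.mem_ker, Submodule.mem_inf]
    constructor
    · rintro ⟨⟨y, hyD⟩, hyk, rfl⟩
      exact ⟨hyD, by simpa [hφ] using hyk⟩
    · rintro ⟨hxD, hxk⟩
      exact ⟨⟨x, hxD⟩, by simpa [hφ] using hxk, rfl⟩
  have hker : Module.finrank ℝ (LinearMap.ker φ) = Module.finrank ℝ B := by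
    rw [hBeq, ← hkermap, Submodule.finrank_map_subtype_eq]
  have hrn := LinearMap.finrank_range_add_finrank_ker φ
  rw [hrange, hker] at hrn
  rw [hDeq]
  omega

end AuxBase

section AuxExt
variable {N : ℕ}
local notation "E" => EuclideanSpace ℝ (Fin N)

noncomputable local instance inst_s4_2 : DecidableEq (EuclideanSpace ℝ (Fin N)) := Classical.decEq _

variable {V : Finset (EuclideanSpace ℝ (Fin N))} {f₀ : EuclideanSpace ℝ (Fin N) →ₗ[ℝ] ℝ}
  {u : EuclideanSpace ℝ (Fin N)} {c'' : ℝ}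

/-- Extension of a face of the vertex-figure section to a face of the polytope through `u`. -/
lemma face_extension
    (huV : u ∈ V)
    (hfP : ∀ x ∈ convexHull ℝ (↑V : Set E), f₀ x ≤ f₀ u)
    (hS : ∀ z ∈ V.erase u, f₀ z < c'') (hcc : c'' < f₀ u)
    {G : Set E}
    (hG : IsFace (convexHull ℝ (↑V : Set E) ∩ {x | f₀ x = c''}) G) :
    ∃ F, IsFace (convexHull ℝ (↑V : Set E)) F ∧ u ∈ F ∧ F ∩ {x | f₀ x = c''} = G := by
  classical
  set P := convexHull ℝ (↑V : Set E) with hP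
  obtain ⟨g, c₀, hgQ, hGeq⟩ := hG
  set c : ℝ := f₀ u with hc
  set h : E →ₗ[ℝ] ℝ := (c₀ - g u) • f₀ + (c - c'') • g with hh
  have happ : ∀ x, h x = (c₀ - g u) * f₀ x + (c - c'') * g x := by
    intro x
    simp [hh, smul_eq_mul]
  have huP : u ∈ P := subset_convexHull ℝ _ huV
  -- A : h ≤ h u on P
  have hA : ∀ x ∈ P, h x ≤ h u := by
    have hVsub : (↑V : Set E) ⊆ {x | h x ≤ h u} := by
      intro z hzV
      simp only [mem_setOf_eq]
      rcases eq_or_ne z u with rfl | hne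
      · exact le_refl _
      · have hzE : z ∈ V.erase u := Finset.mem_erase.2 ⟨hne, hzV⟩
        have hfz := hS z hzE
        have hApos : (0:ℝ) < c - f₀ z := by rw [hc]; linarith
        set mz := crossPt f₀ u c'' z with hmz
        have hmzQ : mz ∈ P ∩ {x | f₀ x = c''} := by
          constructor
          · have hseg := crossPt_mem_segment (S := V.erase u) hcc hS hzE
            have : segment ℝ u z ⊆ P :=
              (convex_convexHull ℝ _).segment_subset huP (subset_convexHull ℝ _ hzV)
            exact this hseg
          · exact f₀_crossPt' hcc hS hzE
        have hgle : g mz ≤ c₀ := hgQ _ hmzQ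
        have hgmz : (c - f₀ z) * g mz = (c - f₀ z) * g u + (c - c'') * (g z - g u) := by
          have hne0 : f₀ u - f₀ z ≠ 0 := by rw [hc] at hApos; linarith
          simp only [hmz, crossPt, map_add, map_smul, map_sub, smul_eq_mul, hc]
          field_simp
        have key : h u - h z = (c - f₀ z) * (c₀ - g mz) := by
          rw [mul_sub, hgmz, happ, happ, hc]
          ring
        have hnn : 0 ≤ (c - f₀ z) * (c₀ - g mz) :=
          mul_nonneg (le_of_lt hApos) (by linarith)
        linarith [key, hnn]
    intro x hx
    exact convexHull_min hVsub (convex_halfSpace_le ⟨h.map_add, h.map_smul⟩ _) hx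
  refine ⟨{x ∈ P | h x = h u}, ⟨h, h u, hA, rfl⟩, ⟨huP, rfl⟩, ?_⟩
  have hccne : c - c'' ≠ 0 := by rw [hc]; linarith
  ext x
  simp only [mem_inter_iff, mem_setOf_eq, hGeq]
  constructor
  · rintro ⟨⟨hxP, hxh⟩, hxf⟩
    refine ⟨⟨hxP, hxf⟩, ?_⟩
    have : h x - h u = (c - c'') * (g x - c₀) := by
      rw [happ, happ, hxf, hc]
      ring
    rw [hxh, sub_self] at this
    have := (mul_eq_zero.1 this.symm).resolve_left hccne
    linarith [sub_eq_zero.1 this]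
  · rintro ⟨⟨hxP, hxf⟩, hxg⟩
    refine ⟨⟨hxP, ?_⟩, hxf⟩
    rw [happ, happ, hxf, hxg, hc]
    ring

/-- dimension drop for faces through `u` under the section. -/
lemma pdim_face_section
    (huV : u ∈ V)
    (hS : ∀ z ∈ V.erase u, f₀ z < c'') (hcc : c'' < f₀ u)
    {F : Set E} (hF : IsFace (convexHull ℝ (↑V : Set E)) F) (huF : u ∈ F)
    (hFH : (F ∩ {x | f₀ x = c''}).Nonempty) :
    pdim F = pdim (F ∩ {x | f₀ x = c''}) + 1 := by
  classical
  set P := convexHull ℝ (↑V : Set E) with hP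
  set VF : Finset E := V.filter (fun y => y ∈ F) with hVF
  have hVFcoe : (↑VF : Set E) = ↑V ∩ F := by
    ext y; simp [hVF]
  have hFeq : F = convexHull ℝ (↑VF : Set E) := by
    rw [hVFcoe]; exact face_eq_convexHull_inter hF
  have huVF : u ∈ VF := Finset.mem_filter.2 ⟨huV, huF⟩
  set SF : Finset E := VF.erase u with hSF
  have hins : insert u SF = VF := Finset.insert_erase huVF
  have hSF' : ∀ z ∈ SF, f₀ z < c'' := by
    intro z hz
    obtain ⟨hne, hzVF⟩ := Finset.mem_erase.1 hz
    exact hS z (Finset.mem_erase.2 ⟨hne, (Finset.mem_filter.1 hzVF).1⟩)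
  have hSFne : SF.Nonempty := by
    rcases Finset.eq_empty_or_nonempty SF with he | hne
    · exfalso
      have : VF = {u} := by rw [← hins, he]; rfl
      rw [this] at hFeq
      simp only [Finset.coe_singleton, convexHull_singleton] at hFeq
      obtain ⟨p, hp1, hp2⟩ := hFH
      rw [hFeq] at hp1
      simp only [mem_singleton_iff] at hp1
      subst hp1
      simp only [mem_setOf_eq] at hp2
      linarith
    · exact hne
  have hFins : F = convexHull ℝ (insert u ↑SF : Set E) := by
    rw [hFeq, ← hins]; simp
  have hsec : F ∩ {x | f₀ x = c''} = convexHull ℝ ↑(SF.image (crossPt f₀ u c'')) := by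
    rw [hFins]
    exact section_eq hcc hSF'
  rw [hsec, hFins, pdim_convexHull, pdim_convexHull]
  exact dim_section hcc hSF' hSFne

end AuxExt

section AuxCount
variable {N : ℕ}
local notation "E" => EuclideanSpace ℝ (Fin N)

noncomputable local instance inst_s4_3 : DecidableEq (EuclideanSpace ℝ (Fin N)) := Classical.decEq _

variable {V : Finset (EuclideanSpace ℝ (Fin N))} {u : EuclideanSpace ℝ (Fin N)}

/-- Choice of an exposing functional and a cut level for a vertex. -/
lemma vertex_functional (huvert : u ∈ vertexSet (convexHull ℝ (↑V : Set E)))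
    (hVne : (V.erase u).Nonempty) :
    ∃ (f₀ : EuclideanSpace ℝ (Fin N) →ₗ[ℝ] ℝ) (c'' : ℝ),
      (∀ z ∈ V.erase u, f₀ z < c'') ∧ c'' < f₀ u ∧
      (∀ x ∈ convexHull ℝ (↑V : Set E), f₀ x ≤ f₀ u) := by
  have huV : u ∈ V := vertex_mem_generators huvert
  obtain ⟨f₀, c, hle, heq⟩ := huvert
  have huP : u ∈ convexHull ℝ (↑V : Set E) := subset_convexHull ℝ _ huV
  have hfu : f₀ u = c := by
    have : u ∈ ({u} : Set E) := rfl
    rw [heq] at this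
    exact this.2
  have hz : ∀ z ∈ V.erase u, f₀ z < c := by
    intro z hz
    obtain ⟨hne, hzV⟩ := Finset.mem_erase.1 hz
    have hzP : z ∈ convexHull ℝ (↑V : Set E) := subset_convexHull ℝ _ hzV
    rcases lt_or_eq_of_le (hle z hzP) with h | h
    · exact h
    · exfalso
      have : z ∈ ({u} : Set E) := by rw [heq]; exact ⟨hzP, h⟩
      exact hne this
  set c' := (V.erase u).sup' hVne f₀ with hc'
  have hc'lt : c' < c := by
    rw [hc', Finset.sup'_lt_iff]
    exact hz
  refine ⟨f₀, (c' + c) / 2, ?_, by rw [hfu]; linarith, ?_⟩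
  · intro z hzz
    have h2 : f₀ z ≤ c' := Finset.le_sup' f₀ hzz
    linarith
  · intro x hx
    rw [hfu]
    exact hle x hx

/-- The main counting step: faces of the vertex figure `Q` inject into faces of `P`
through `u`, respecting dimensions and avoidance constraints. -/
lemma count_step (huvert : u ∈ vertexSet (convexHull ℝ (↑V : Set E)))
    (hVne : (V.erase u).Nonempty)
    {t : ℕ} (w : Fin t → EuclideanSpace ℝ (Fin N)) (hw : ∀ j, w j ∈ V.erase u) :
    ∃ (Q : Set E), IsPolytope Q ∧ Q.Nonempty ∧
      pdim (convexHull ℝ (↑V : Set E)) = pdim Q + 1 ∧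
      ∃ q : Fin t → EuclideanSpace ℝ (Fin N),
        ∀ k' : ℕ,
          {G : Set E | IsFace Q G ∧ G.Nonempty ∧ pdim G = k' ∧ ∀ j, q j ∉ G}.ncard ≤
          {F : Set E | IsFace (convexHull ℝ (↑V : Set E)) F ∧ F.Nonempty ∧ pdim F = k' + 1 ∧
            u ∈ F ∧ ∀ j, w j ∉ F}.ncard := by
  classical
  set P := convexHull ℝ (↑V : Set E) with hP
  obtain ⟨f₀, c'', hS, hcc, hfP⟩ := vertex_functional huvert hVne
  have huV : u ∈ V := vertex_mem_generators huvert
  set H : Set E := {x | f₀ x = c''} with hH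
  set Q : Set E := P ∩ H with hQ
  set m : E → E := crossPt f₀ u c'' with hm
  -- Q is a polytope: section_eq
  have hinsV : insert u (V.erase u) = V := Finset.insert_erase huV
  have hPins : P = convexHull ℝ (insert u ↑(V.erase u) : Set E) := by
    rw [hP, ← hinsV]; simp
  have hQeq : Q = convexHull ℝ ↑((V.erase u).image m) := by
    rw [hQ, hH, hPins, hm]
    exact section_eq hcc hS
  have hQpoly : IsPolytope Q := ⟨_, hQeq⟩
  have hQne : Q.Nonempty := by
    obtain ⟨z, hz⟩ := hVne
    refine ⟨m z, ?_⟩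
    rw [hQeq]
    apply subset_convexHull ℝ _
    simp only [Finset.coe_image, mem_image, Finset.mem_coe]
    exact ⟨z, hz, rfl⟩
  have hdimQ : pdim P = pdim Q + 1 := by
    rw [hPins, hQeq, pdim_convexHull, pdim_convexHull, hm]
    exact dim_section hcc hS hVne
  refine ⟨Q, hQpoly, hQne, hdimQ, fun j => m (w j), ?_⟩
  intro k'
  -- the injection
  set Φ : Set E → Set E := fun G =>
    if h : ∃ F, IsFace P F ∧ u ∈ F ∧ F ∩ H = G then h.choose else ∅ with hΦ
  set A' := {G : Set E | IsFace Q G ∧ G.Nonempty ∧ pdim G = k' ∧ ∀ j, m (w j) ∉ G} with hA'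
  set A := {F : Set E | IsFace P F ∧ F.Nonempty ∧ pdim F = k' + 1 ∧ u ∈ F ∧ ∀ j, w j ∉ F} with hA
  have hspec : ∀ G ∈ A', IsFace P (Φ G) ∧ u ∈ Φ G ∧ (Φ G) ∩ H = G := by
    intro G hG
    obtain ⟨hGface, hGne, hGdim, hGav⟩ := hG
    have hex : ∃ F, IsFace P F ∧ u ∈ F ∧ F ∩ H = G :=
      face_extension huV hfP hS hcc hGface
    rw [hΦ]
    simp only [dif_pos hex]
    exact hex.choose_spec
  have hmaps : ∀ G ∈ A', Φ G ∈ A := by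
    intro G hG
    obtain ⟨hGface, hGne, hGdim, hGav⟩ := hG
    obtain ⟨hF, huF, hFH⟩ := hspec G ⟨hGface, hGne, hGdim, hGav⟩
    have hFH' : Φ G ∩ {x | f₀ x = c''} = G := hFH
    have hFHne : (Φ G ∩ {x | f₀ x = c''}).Nonempty := by rw [hFH']; exact hGne
    have hdim : pdim (Φ G) = k' + 1 := by
      have hps := pdim_face_section huV hS hcc hF huF hFHne
      rw [hFH'] at hps
      rw [hps, hGdim]
    refine ⟨hF, ⟨u, huF⟩, hdim, huF, ?_⟩
    intro j hwj
    apply hGav j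
    rw [← hFH']
    constructor
    · have hseg := crossPt_mem_segment (S := V.erase u) hcc hS (hw j)
      have hconv : Convex ℝ (Φ G) := isFace_convex (convex_convexHull ℝ _) hF
      exact hconv.segment_subset huF hwj hseg
    · exact f₀_crossPt' hcc hS (hw j)
  have hinj : InjOn Φ A' := by
    intro G hG G' hG' hGG
    have h1 := (hspec G hG).2.2
    have h2 := (hspec G' hG').2.2
    rw [← h1, ← h2, hGG]
  have hAfin : A.Finite := by
    apply (faces_finite V).subset
    intro F hF
    exact hF.1
  exact Set.ncard_le_ncard_of_injOn Φ hmaps hinj hAfin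

/-- replace an arbitrary point by a generator contained in every face containing it -/
lemma reduce_point (hVne : V.Nonempty) (w : EuclideanSpace ℝ (Fin N)) :
    ∃ w' ∈ V, ∀ F, IsFace (convexHull ℝ (↑V : Set E)) F → w ∈ F → w' ∈ F := by
  classical
  by_cases hwP : w ∈ convexHull ℝ (↑V : Set E)
  · obtain ⟨ω, h0, h1, hx⟩ := Finset.mem_convexHull'.1 hwP
    have hpos : ∃ z ∈ V, 0 < ω z := by
      by_contra hc
      push_neg at hc
      have : ∑ y ∈ V, ω y ≤ 0 := Finset.sum_nonpos (fun y hy => hc y hy)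
      linarith
    obtain ⟨z, hzV, hz⟩ := hpos
    exact ⟨z, hzV, fun F hF hwF => mem_face_of_pos_weight hF h0 h1 hx hwF hzV hz⟩
  · obtain ⟨z, hz⟩ := hVne
    exact ⟨z, hz, fun F hF hwF => absurd (isFace_subset hF hwF) hwP⟩

/-- pick a vertex avoiding `t ≤ d` given points -/
lemma pick_vertex {d t : ℕ} (hdim : pdim (convexHull ℝ (↑V : Set E)) = d)
    (hPne : (convexHull ℝ (↑V : Set E)).Nonempty)
    (htd : t ≤ d) (w : Fin t → EuclideanSpace ℝ (Fin N)) :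
    ∃ u, u ∈ vertexSet (convexHull ℝ (↑V : Set E)) ∧ ∀ j, w j ≠ u := by
  classical
  obtain ⟨S, hcard, hSsub⟩ := exists_many_vertices hPne hdim
  have : (S \ (Finset.univ : Finset (Fin t)).image w).Nonempty := by
    apply Finset.card_pos.1
    have h1 : ((Finset.univ : Finset (Fin t)).image w).card ≤ t := by
      apply le_trans (Finset.card_image_le)
      simp
    have := Finset.le_card_sdiff ((Finset.univ : Finset (Fin t)).image w) S
    have h2 : S.card - ((Finset.univ : Finset (Fin t)).image w).card ≤ (S \ (Finset.univ : Finset (Fin t)).image w).card := Finset.le_card_sdiff _ _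
    omega
  obtain ⟨u, hu⟩ := this
  obtain ⟨huS, hunot⟩ := Finset.mem_sdiff.1 hu
  refine ⟨u, hSsub huS, fun j hj => hunot ?_⟩
  rw [← hj]
  exact Finset.mem_image_of_mem w (Finset.mem_univ j)

end AuxCount

theorem avoid_bound (d : ℕ) : ∀ (N : ℕ) (P : Set (EuclideanSpace ℝ (Fin N))),
    IsPolytope P → P.Nonempty → pdim P = d →
    ∀ (t k : ℕ) (w : Fin t → EuclideanSpace ℝ (Fin N)),
    (d + 1 - t).choose (k + 1) ≤
      {F : Set (EuclideanSpace ℝ (Fin N)) |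
        IsFace P F ∧ F.Nonempty ∧ pdim F = k ∧ ∀ j, w j ∉ F}.ncard := by
  classical
  induction d with
  | zero =>
    intro N P hP hne hdim t k w
    rcases Nat.eq_zero_or_pos t with rfl | ht
    · rcases Nat.eq_zero_or_pos k with rfl | hk
      · -- need 1 ≤ ncard
        simp only [Nat.sub_zero]
        have hmem : P ∈ {F : Set (EuclideanSpace ℝ (Fin N)) |
            IsFace P F ∧ F.Nonempty ∧ pdim F = 0 ∧ ∀ j, w j ∉ F} :=
          ⟨isFace_self P, hne, hdim, fun j => j.elim0⟩
        obtain ⟨V, rfl⟩ := hP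
        have hfin : {F : Set (EuclideanSpace ℝ (Fin N)) |
            IsFace (convexHull ℝ ↑V) F ∧ F.Nonempty ∧ pdim F = 0 ∧ ∀ j, w j ∉ F}.Finite :=
          (faces_finite V).subset (fun F hF => hF.1)
        have h1 := (Set.ncard_pos hfin).2 ⟨_, hmem⟩
        have hch : (0 + 1).choose (0 + 1) = 1 := rfl
        rw [hch]
        omega
      · have : (0 + 1 - 0).choose (k + 1) = 0 := by
          apply Nat.choose_eq_zero_of_lt; omega
        rw [this]; exact Nat.zero_le _
    · have : 0 + 1 - t = 0 := by omega
      rw [this]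
      simp [Nat.choose]
  | succ d ihd =>
    suffices H : ∀ (j : ℕ) (N : ℕ) (P : Set (EuclideanSpace ℝ (Fin N))),
        IsPolytope P → P.Nonempty → pdim P = d + 1 →
        ∀ (t k : ℕ) (w : Fin t → EuclideanSpace ℝ (Fin N)), d + 2 - t ≤ j →
        (d + 2 - t).choose (k + 1) ≤
          {F : Set (EuclideanSpace ℝ (Fin N)) |
            IsFace P F ∧ F.Nonempty ∧ pdim F = k ∧ ∀ j, w j ∉ F}.ncard by
      intro N P hP hne hdim t k w
      exact H (d + 2) N P hP hne hdim t k w (Nat.sub_le _ _)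
    intro j
    induction j with
    | zero =>
      intro N P hP hne hdim t k w hj
      have h0 : d + 2 - t = 0 := Nat.le_zero.1 hj
      rw [h0]
      simp [Nat.choose]
    | succ j ihj =>
      intro N P hP hne hdim t k w hj
      -- trivial case
      by_cases hkd : d + 2 - t < k + 1
      · rw [Nat.choose_eq_zero_of_lt hkd]; exact Nat.zero_le _
      push_neg at hkd
      by_cases hcase : d + 2 - t ≤ j
      · exact ihj N P hP hne hdim t k w hcase
      push_neg at hcase
      have hdt : d + 2 - t = j + 1 := by omega
      have htd : t ≤ d + 1 := by omega
      obtain ⟨V, rfl⟩ := hP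
      set P := convexHull ℝ (↑V : Set (EuclideanSpace ℝ (Fin N))) with hPdef
      have hVne : V.Nonempty := by
        rcases V.eq_empty_or_nonempty with he | h
        · exfalso
          rw [hPdef, he] at hne
          simp only [Finset.coe_empty, convexHull_empty] at hne
          exact Set.not_nonempty_empty hne
        · exact h
      -- reduce the avoided points into V
      choose w' hw'V hw'prop using fun i => reduce_point hVne (w i)
      have hfinT : {F : Set (EuclideanSpace ℝ (Fin N)) |
          IsFace P F ∧ F.Nonempty ∧ pdim F = k ∧ ∀ i, w i ∉ F}.Finite :=
        (faces_finite V).subset (fun F hF => hF.1)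
      have hsub : {F : Set (EuclideanSpace ℝ (Fin N)) |
            IsFace P F ∧ F.Nonempty ∧ pdim F = k ∧ ∀ i, w' i ∉ F} ⊆
          {F : Set (EuclideanSpace ℝ (Fin N)) |
            IsFace P F ∧ F.Nonempty ∧ pdim F = k ∧ ∀ i, w i ∉ F} := by
        rintro F ⟨h1, h2, h3, h4⟩
        refine ⟨h1, h2, h3, fun i hwi => h4 i (hw'prop i F h1 hwi)⟩
      refine le_trans ?_ (Set.ncard_le_ncard hsub hfinT)
      -- pick a vertex u avoiding w'
      obtain ⟨u, huvert, hune⟩ := pick_vertex hdim hne (le_trans (Nat.le_refl t) htd) w'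
      have huV : u ∈ V := vertex_mem_generators huvert
      have hVeraseNe : (V.erase u).Nonempty := by
        rcases (V.erase u).eq_empty_or_nonempty with he | h
        · exfalso
          have hVu : V = {u} := by
            ext z
            simp only [Finset.mem_singleton]
            constructor
            · intro hz
              by_contra hzz
              exact (Finset.notMem_empty z) (he ▸ Finset.mem_erase.2 ⟨hzz, hz⟩)
            · rintro rfl; exact huV
          have : pdim P = 0 := by
            rw [hPdef, hVu]
            simp only [Finset.coe_singleton, convexHull_singleton]
            exact pdim_singleton u
          omega
        · exact h
      have hw'erase : ∀ i, w' i ∈ V.erase u := fun i =>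
        Finset.mem_erase.2 ⟨hune i, hw'V i⟩
      -- split into faces containing u (A) and not containing u (B)
      set A := {F : Set (EuclideanSpace ℝ (Fin N)) |
        IsFace P F ∧ F.Nonempty ∧ pdim F = k ∧ u ∈ F ∧ ∀ i, w' i ∉ F} with hA
      set B := {F : Set (EuclideanSpace ℝ (Fin N)) |
        IsFace P F ∧ F.Nonempty ∧ pdim F = k ∧ u ∉ F ∧ ∀ i, w' i ∉ F} with hB
      have hAfin : A.Finite := (faces_finite V).subset (fun F hF => hF.1)
      have hBfin : B.Finite := (faces_finite V).subset (fun F hF => hF.1)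
      have hdisj : Disjoint A B := by
        rw [Set.disjoint_left]
        rintro F ⟨_, _, _, hu1, _⟩ ⟨_, _, _, hu2, _⟩
        exact hu2 hu1
      have hunion : A ∪ B ⊆ {F : Set (EuclideanSpace ℝ (Fin N)) |
          IsFace P F ∧ F.Nonempty ∧ pdim F = k ∧ ∀ i, w' i ∉ F} := by
        rintro F (⟨h1, h2, h3, _, h5⟩ | ⟨h1, h2, h3, _, h5⟩) <;> exact ⟨h1, h2, h3, h5⟩
      have hcount : A.ncard + B.ncard ≤ {F : Set (EuclideanSpace ℝ (Fin N)) |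
          IsFace P F ∧ F.Nonempty ∧ pdim F = k ∧ ∀ i, w' i ∉ F}.ncard := by
        rw [← Set.ncard_union_eq hdisj hAfin hBfin]
        exact Set.ncard_le_ncard hunion ((faces_finite V).subset (fun F hF => hF.1))
      -- B bound via ihj with t+1
      have hBbound : (d + 1 - t).choose (k + 1) ≤ B.ncard := by
        have h1 := ihj N P ⟨V, rfl⟩ hne hdim (t + 1) k
          (Fin.cons u w' : Fin (t + 1) → EuclideanSpace ℝ (Fin N)) (by omega)
        have heq : {F : Set (EuclideanSpace ℝ (Fin N)) |
            IsFace P F ∧ F.Nonempty ∧ pdim F = k ∧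
              ∀ i, (Fin.cons u w' : Fin (t + 1) → EuclideanSpace ℝ (Fin N)) i ∉ F} = B := by
          ext F
          simp only [hB, mem_setOf_eq, and_congr_right_iff]
          intro _ _ _
          rw [Fin.forall_fin_succ]
          simp [Fin.cons_zero, Fin.cons_succ, and_comm]
        rw [heq] at h1
        have : d + 2 - (t + 1) = d + 1 - t := by omega
        rw [this] at h1
        exact h1
      -- A bound
      have hABound : (d + 1 - t).choose k ≤ A.ncard := by
        rcases Nat.eq_zero_or_pos k with rfl | hk
        · -- k = 0 : {u} ∈ A
          have hmem : {u} ∈ A := by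
            refine ⟨huvert, singleton_nonempty u, pdim_singleton u, rfl, ?_⟩
            intro i hi
            simp only [mem_singleton_iff] at hi
            exact hune i hi
          have := (Set.ncard_pos hAfin).2 ⟨_, hmem⟩
          simpa using Nat.succ_le_of_lt this
        · obtain ⟨k', rfl⟩ : ∃ k', k = k' + 1 := ⟨k - 1, by omega⟩
          obtain ⟨Q, hQpoly, hQne, hQdim, q, hq⟩ := count_step huvert (by convert hVeraseNe) w' (fun i => by convert hw'erase i)
          have hQd : pdim Q = d := by
            rw [hPdef] at hdim
            omega
          have h2 := ihd N Q hQpoly hQne hQd t k' q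
          have h3 := hq k'
          exact le_trans h2 h3
      -- Pascal
      have hpascal : (d + 2 - t).choose (k + 1) = (d + 1 - t).choose k + (d + 1 - t).choose (k + 1) := by
        have h1 : d + 2 - t = (d + 1 - t) + 1 := by omega
        rw [h1, Nat.choose_succ_succ]
      omega


theorem stmt4 {N : ℕ} (P : Set (EuclideanSpace ℝ (Fin N))) (d m k : ℕ)
    (hP : IsPolytope P) (hdim : pdim P = d)
    (v : Fin m → EuclideanSpace ℝ (Fin N)) (hv : Function.Injective v)
    (hvert : ∀ i, v i ∈ vertexSet P) (hm : m ≤ d) :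
    {F : Set (EuclideanSpace ℝ (Fin N)) |
        IsFace P F ∧ F.Nonempty ∧ pdim F = k ∧ ∃ i, v i ∈ F}.ncard ≥
      ∑ i : Fin m, (d - (i : ℕ)).choose k := by
  classical
  rcases Nat.eq_zero_or_pos m with rfl | hm1
  · simp
  have hd1 : 1 ≤ d := le_trans hm1 hm
  obtain ⟨V, rfl⟩ := hP
  set P := convexHull ℝ (↑V : Set (EuclideanSpace ℝ (Fin N))) with hPdef
  have hvV : ∀ i, v i ∈ V := fun i => vertex_mem_generators (hvert i)
  have hne : P.Nonempty := ⟨v ⟨0, hm1⟩, subset_convexHull ℝ _ (hvV _)⟩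
  -- the family S i
  set S : Fin m → Set (Set (EuclideanSpace ℝ (Fin N))) := fun i =>
    {F | IsFace P F ∧ F.Nonempty ∧ pdim F = k ∧ v i ∈ F ∧
      ∀ j : Fin (i : ℕ), v ⟨(j : ℕ), lt_trans j.isLt i.isLt⟩ ∉ F} with hS
  have hSfin : ∀ i, (S i).Finite := fun i => (faces_finite V).subset (fun F hF => hF.1)
  have hTfin : {F : Set (EuclideanSpace ℝ (Fin N)) |
      IsFace P F ∧ F.Nonempty ∧ pdim F = k ∧ ∃ i, v i ∈ F}.Finite :=
    (faces_finite V).subset (fun F hF => hF.1)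
  -- each S i is large
  have hSbound : ∀ i : Fin m, (d - (i : ℕ)).choose k ≤ (S i).ncard := by
    intro i
    rcases Nat.eq_zero_or_pos k with rfl | hk
    · -- k = 0
      have hmem : {v i} ∈ S i := by
        refine ⟨hvert i, singleton_nonempty _, pdim_singleton _, rfl, ?_⟩
        intro j hj
        simp only [mem_singleton_iff] at hj
        have heq := hv hj
        have h2 : (j : ℕ) = (i : ℕ) := congrArg Fin.val heq
        omega
      have h1 := (Set.ncard_pos (hSfin i)).2 ⟨_, hmem⟩
      simpa using Nat.succ_le_of_lt h1
    · obtain ⟨k', rfl⟩ : ∃ k', k = k' + 1 := ⟨k - 1, by omega⟩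
      set u := v i with hu
      have huvert : u ∈ vertexSet P := hvert i
      have huV : u ∈ V := hvV i
      have hVeraseNe : (V.erase u).Nonempty := by
        rcases (V.erase u).eq_empty_or_nonempty with he | h
        · exfalso
          have hVu : V = {u} := by
            ext z
            simp only [Finset.mem_singleton]
            constructor
            · intro hz
              by_contra hzz
              exact (Finset.notMem_empty z) (he ▸ Finset.mem_erase.2 ⟨hzz, hz⟩)
            · rintro rfl; exact huV
          have hp0 : pdim P = 0 := by
            rw [hPdef, hVu]
            simp only [Finset.coe_singleton, convexHull_singleton]
            exact pdim_singleton u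
          omega
        · exact h
      set w : Fin (i : ℕ) → EuclideanSpace ℝ (Fin N) := fun j =>
        v ⟨(j : ℕ), lt_trans j.isLt i.isLt⟩ with hw
      have hwerase : ∀ j, w j ∈ V.erase u := by
        intro j
        refine Finset.mem_erase.2 ⟨?_, hvV _⟩
        intro hj
        have heq := hv hj
        have h2 : (j : ℕ) = (i : ℕ) := congrArg Fin.val heq
        omega
      obtain ⟨Q, hQpoly, hQne, hQdim, q, hq⟩ := count_step huvert (by convert hVeraseNe) w (fun j => by convert hwerase j)
      have hQd : pdim Q = d - 1 := by
        rw [hPdef] at hdim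
        omega
      have h2 := avoid_bound (d - 1) N Q hQpoly hQne hQd (i : ℕ) k' q
      have h3 := hq k'
      have harith : (d - 1 + 1 - (i : ℕ)).choose (k' + 1) = (d - (i : ℕ)).choose (k' + 1) := by
        congr 1
        omega
      rw [harith] at h2
      exact le_trans h2 h3
  -- disjointness
  have hdisj : ∀ i i' : Fin m, i ≠ i' → Disjoint (S i) (S i') := by
    have key : ∀ i i' : Fin m, (i : ℕ) < (i' : ℕ) → Disjoint (S i) (S i') := by
      intro i i' hlt
      rw [Set.disjoint_left]
      rintro F ⟨_, _, _, hvi, _⟩ ⟨_, _, _, _, havoid⟩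
      exact havoid ⟨(i : ℕ), hlt⟩ hvi
    intro i i' hne'
    rcases lt_or_gt_of_ne (fun h => hne' (Fin.ext h) : (i : ℕ) ≠ (i' : ℕ)) with h | h
    · exact key i i' h
    · exact (key i' i h).symm
  -- assemble via Finsets
  set Fi : Fin m → Finset (Set (EuclideanSpace ℝ (Fin N))) := fun i => (hSfin i).toFinset with hFi
  have hcard : ∀ i, (S i).ncard = (Fi i).card := fun i => Set.ncard_eq_toFinset_card _ _
  have hdisjF : ∀ i ∈ (Finset.univ : Finset (Fin m)), ∀ i' ∈ Finset.univ, i ≠ i' →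
      Disjoint (Fi i) (Fi i') := by
    intro i _ i' _ hne'
    rw [Finset.disjoint_left]
    intro F hF hF'
    rw [hFi] at hF hF'
    simp only [Set.Finite.mem_toFinset] at hF hF'
    exact (Set.disjoint_left.1 (hdisj i i' hne')) hF hF'
  have hbiU := Finset.card_biUnion hdisjF
  have hsubT : (Finset.univ : Finset (Fin m)).biUnion Fi ⊆ hTfin.toFinset := by
    intro F hF
    simp only [Finset.mem_biUnion] at hF
    obtain ⟨i, _, hFi'⟩ := hF
    simp only [hFi, Set.Finite.mem_toFinset] at hFi' ⊢
    obtain ⟨h1, h2, h3, h4, _⟩ := hFi'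
    exact ⟨h1, h2, h3, i, h4⟩
  calc ∑ i : Fin m, (d - (i : ℕ)).choose k
      ≤ ∑ i : Fin m, (S i).ncard := Finset.sum_le_sum (fun i _ => hSbound i)
    _ = ∑ i : Fin m, (Fi i).card := Finset.sum_congr rfl (fun i _ => hcard i)
    _ = ((Finset.univ : Finset (Fin m)).biUnion Fi).card := hbiU.symm
    _ ≤ hTfin.toFinset.card := Finset.card_le_card hsubT
    _ = {F : Set (EuclideanSpace ℝ (Fin N)) |
        IsFace P F ∧ F.Nonempty ∧ pdim F = k ∧ ∃ i, v i ∈ F}.ncard :=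
      (Set.ncard_eq_toFinset_card _ _).symm
end

section
/- Every simplicial d-polytope with exactly d+2 vertices is combinatorially equivalent to T^d_m = T^m ⊕ T^{d-m} (the direct sum of simplices) for some 1 ≤ m ≤ d-1. -/
open Set

section T
open Finset
open scoped Classical
variable {N : ℕ}
local notation "X" => EuclideanSpace ℝ (Fin N)

lemma face_hull (V : Finset X) (f : X →ₗ[ℝ] ℝ) (c : ℝ) (hc : ∀ v ∈ V, f v ≤ c) :
    {x ∈ convexHull ℝ (V : Set X) | f x = c} =
      convexHull ℝ ((V.filter (fun v => f v = c) : Finset X) : Set X) := by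
  apply le_antisymm
  · rintro x ⟨hx, hfx⟩
    rw [Finset.convexHull_eq] at hx
    obtain ⟨w, hw0, hw1, hcm⟩ := hx
    have hxeq : x = ∑ y ∈ V, w y • y := by
      rw [← hcm, Finset.centerMass_eq_of_sum_1 _ _ hw1]; rfl
    have hfsum : ∑ y ∈ V, w y * (c - f y) = 0 := by
      have : f x = ∑ y ∈ V, w y * f y := by
        rw [hxeq, map_sum]; simp [map_smul, smul_eq_mul]
      have h2 : ∑ y ∈ V, w y * c = c := by
        rw [← Finset.sum_mul, hw1, one_mul]
      calc ∑ y ∈ V, w y * (c - f y) = (∑ y ∈ V, w y * c) - ∑ y ∈ V, w y * f y := by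
            rw [← Finset.sum_sub_distrib]; exact Finset.sum_congr rfl (fun y _ => by ring)
        _ = c - f x := by rw [h2, this]
        _ = 0 := by rw [hfx, sub_self]
    have hkey : ∀ y ∈ V, w y ≠ 0 → f y = c := by
      intro y hy hwy
      have := (Finset.sum_eq_zero_iff_of_nonneg (fun y hy =>
        mul_nonneg (hw0 y hy) (sub_nonneg.2 (hc y hy)))).1 hfsum y hy
      rcases mul_eq_zero.1 this with h | h
      · exact absurd h hwy
      · linarith [sub_eq_zero.1 h]
    have : (V.filter fun y => w y ≠ 0).centerMass w id ∈
        convexHull ℝ ((V.filter (fun v => f v = c) : Finset X) : Set X) := by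
      apply Finset.centerMass_mem_convexHull
      · intro i hi; exact hw0 i (Finset.mem_filter.1 hi).1
      · rw [Finset.sum_filter_ne_zero, hw1]; norm_num
      · intro i hi
        obtain ⟨hiV, hiw⟩ := Finset.mem_filter.1 hi
        simp only [id_eq, Finset.coe_filter, Set.mem_setOf_eq]
        exact ⟨hiV, hkey i hiV hiw⟩
    rwa [Finset.centerMass_filter_ne_zero, hcm] at this
  · apply convexHull_min
    · intro v hv
      rw [Finset.coe_filter] at hv
      exact ⟨subset_convexHull ℝ _ hv.1, hv.2⟩
    · exact (convex_convexHull ℝ _).inter (convex_hyperplane f.isLinear c)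
end T
section T2
open Finset
open scoped Classical
variable {N : ℕ}
local notation "X" => EuclideanSpace ℝ (Fin N)

lemma vertex_extreme {P : Set X} (v : X) (hv : v ∈ vertexSet P) :
    v ∈ Set.extremePoints ℝ P := by
  obtain ⟨f, c, hfc, hface⟩ := hv
  have hvP : v ∈ P ∧ f v = c := by
    have : v ∈ ({v} : Set X) := rfl
    rw [hface] at this; exact this
  rw [mem_extremePoints]
  refine ⟨hvP.1, fun x₁ hx₁ x₂ hx₂ hseg => ?_⟩
  obtain ⟨a, b, ha, hb, hab, habv⟩ := hseg
  have h1 : f x₁ ≤ c := hfc x₁ hx₁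
  have h2 : f x₂ ≤ c := hfc x₂ hx₂
  have hfv : a * f x₁ + b * f x₂ = c := by
    have := congrArg f habv
    simpa [map_add, map_smul, smul_eq_mul, hvP.2] using this
  have e1 : f x₁ = c := by
    by_contra h
    have h' : f x₁ < c := lt_of_le_of_ne h1 h
    have hsum : a * c + b * c = c := by rw [← add_mul, hab, one_mul]
    linarith [mul_lt_mul_of_pos_left h' ha, mul_le_mul_of_nonneg_left h2 hb.le]
  have e2 : f x₂ = c := by
    by_contra h
    have h' : f x₂ < c := lt_of_le_of_ne h2 h
    have hsum : a * c + b * c = c := by rw [← add_mul, hab, one_mul]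
    linarith [mul_lt_mul_of_pos_left h' hb, mul_le_mul_of_nonneg_left h1 ha.le]
  constructor
  · have : x₁ ∈ ({v} : Set X) := by rw [hface]; exact ⟨hx₁, e1⟩
    exact this
  · have : x₂ ∈ ({v} : Set X) := by rw [hface]; exact ⟨hx₂, e2⟩
    exact this

lemma extreme_vertex {P : Set X} (V : Finset X) (hP : P = convexHull ℝ (V : Set X)) :
    Set.extremePoints ℝ P ⊆ vertexSet P := by
  intro e he
  have heV : e ∈ V := by
    have := extremePoints_convexHull_subset (𝕜 := ℝ) (A := (V : Set X))
    exact this (hP ▸ he)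
  have heP : e ∈ P := he.1
  -- e is not in the hull of the other points
  have hnot : e ∉ convexHull ℝ ((V.erase e : Finset X) : Set X) := by
    intro hmem
    have hsub : convexHull ℝ ((V.erase e : Finset X) : Set X) ⊆ P := by
      rw [hP]; exact convexHull_mono (by exact_mod_cast Finset.erase_subset e V)
    have hext : e ∈ Set.extremePoints ℝ (convexHull ℝ ((V.erase e : Finset X) : Set X)) := by
      rw [mem_extremePoints]
      exact ⟨hmem, fun x₁ hx₁ x₂ hx₂ hseg =>
        (mem_extremePoints.1 he).2 x₁ (hsub hx₁) x₂ (hsub hx₂) hseg⟩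
    have : e ∈ (V.erase e : Finset X) :=
      extremePoints_convexHull_subset (𝕜 := ℝ) hext
    exact (Finset.notMem_erase e V) this
  by_cases hempty : V.erase e = ∅
  · -- V = {e}, P = {e}
    have hVe : V = {e} := by
      ext x; simp only [Finset.mem_singleton]
      constructor
      · intro hx
        by_contra hne
        exact absurd (Finset.mem_erase.2 ⟨hne, hx⟩) (by simp [hempty])
      · intro h; subst h; exact heV
    refine ⟨0, 0, by simp, ?_⟩
    rw [hP, hVe]
    ext x; simp [eq_comm]
  · obtain ⟨f, u, hfu, hue⟩ := geometric_hahn_banach_closed_point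
      (convex_convexHull ℝ _) ((V.erase e).finite_toSet.isClosed_convexHull ℝ) hnot
    set c := f e with hc
    have hcV : ∀ v ∈ V, f v ≤ c := by
      intro v hv
      by_cases hve : v = e
      · subst hve; exact le_refl _
      · have : v ∈ convexHull ℝ ((V.erase e : Finset X) : Set X) :=
          subset_convexHull ℝ _ (by exact_mod_cast Finset.mem_erase.2 ⟨hve, hv⟩)
        linarith [hfu _ this]
    have hcP : ∀ x ∈ P, f x ≤ c := by
      rw [hP]
      intro x hx
      have : convexHull ℝ (V : Set X) ⊆ {y | f y ≤ c} :=
        convexHull_min (fun v hv => hcV v hv) (convex_halfSpace_le (f := (f : X → ℝ)) ⟨f.map_add, by simp⟩ c)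
      exact this hx
    refine ⟨f.toLinearMap, c, hcP, ?_⟩
    have hfh : {x ∈ P | f.toLinearMap x = c}
        = convexHull ℝ ((V.filter (fun v => f.toLinearMap v = c) : Finset X) : Set X) := by
      rw [hP]; exact face_hull V f.toLinearMap c hcV
    have hfilter : V.filter (fun v => f.toLinearMap v = c) = {e} := by
      ext v
      simp only [Finset.mem_filter, Finset.mem_singleton, ContinuousLinearMap.coe_coe]
      constructor
      · rintro ⟨hv, hfv⟩
        by_contra hne
        have : v ∈ convexHull ℝ ((V.erase e : Finset X) : Set X) :=
          subset_convexHull ℝ _ (by exact_mod_cast Finset.mem_erase.2 ⟨hne, hv⟩)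
        have := hfu _ this
        rw [hfv] at this; linarith
      · intro h; subst h; exact ⟨heV, rfl⟩
    rw [hfilter] at hfh
    simp only [Finset.coe_singleton, convexHull_singleton] at hfh
    exact hfh.symm

lemma hull_vertexSet {P : Set X} (V : Finset X) (hP : P = convexHull ℝ (V : Set X)) :
    P = convexHull ℝ (vertexSet P) ∧ (vertexSet P).Finite := by
  have hVE : vertexSet P = Set.extremePoints ℝ P := by
    apply Set.Subset.antisymm
    · intro v hv; exact vertex_extreme v hv
    · exact extreme_vertex V hP
  have hfin : (vertexSet P).Finite := by
    rw [hVE]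
    exact Set.Finite.subset V.finite_toSet (hP ▸ extremePoints_convexHull_subset (𝕜 := ℝ))
  refine ⟨?_, hfin⟩
  have hcomp : IsCompact P := hP ▸ V.finite_toSet.isCompact_convexHull ℝ
  have hconv : Convex ℝ P := hP ▸ convex_convexHull ℝ _
  have := closure_convexHull_extremePoints hcomp hconv
  rw [← hVE] at this
  exact (this.symm).trans ((hfin.isClosed_convexHull ℝ).closure_eq)
end T2
section T3
open Finset
open scoped Classical
variable {N : ℕ}
local notation "X" => EuclideanSpace ℝ (Fin N)

lemma mem_affineSpan_finset {A : Finset X} {x : X} (hx : x ∈ affineSpan ℝ (A : Set X)) :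
    ∃ α : X → ℝ, (∑ v ∈ A, α v) = 1 ∧ (∑ v ∈ A, α v • v) = x := by
  have hx' : x ∈ affineSpan ℝ (Set.range (Subtype.val : {y // y ∈ A} → X)) := by
    rwa [Subtype.range_coe]
  obtain ⟨s, w, hw1, hws⟩ := eq_affineCombination_of_mem_affineSpan hx'
  refine ⟨fun v => if h : v ∈ A then (if ⟨v, h⟩ ∈ s then w ⟨v, h⟩ else 0) else 0, ?_, ?_⟩
  · rw [← Finset.sum_attach A]
    have : ∀ i ∈ A.attach, (if h : (i : X) ∈ A then (if ⟨(i : X), h⟩ ∈ s then w ⟨(i : X), h⟩ else 0) else 0)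
        = (if i ∈ s then w i else 0) := by
      intro i _; rw [dif_pos i.2]
    rw [Finset.sum_congr rfl this, Finset.sum_ite_mem,
      Finset.inter_eq_right.2 (fun i _ => Finset.mem_attach A i), hw1]
  · rw [← Finset.sum_attach A]
    have : ∀ i ∈ A.attach, (if h : (i : X) ∈ A then (if ⟨(i : X), h⟩ ∈ s then w ⟨(i : X), h⟩ else 0) else 0) • (i : X)
        = (if i ∈ s then w i • (i : X) else 0) := by
      intro i _; rw [dif_pos i.2]
      simp only [Subtype.coe_eta]
      split <;> simp
    rw [Finset.sum_congr rfl this, Finset.sum_ite_mem,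
      Finset.inter_eq_right.2 (fun i _ => Finset.mem_attach A i)]
    rw [hws, s.affineCombination_eq_linear_combination _ _ hw1]

lemma rank_insert (s : Set X) (x w₀ : X) (hw : w₀ ∈ s) :
    Module.finrank ℝ (vectorSpan ℝ (insert x s)) ≤ Module.finrank ℝ (vectorSpan ℝ s) + 1 := by
  have h1 : vectorSpan ℝ (insert x s) =
      Submodule.span ℝ ((fun y => y -ᵥ w₀) '' insert x s) :=
    vectorSpan_eq_span_vsub_set_right ℝ (Set.mem_insert_of_mem x hw)
  have h2 : vectorSpan ℝ s = Submodule.span ℝ ((fun y => y -ᵥ w₀) '' s) :=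
    vectorSpan_eq_span_vsub_set_right ℝ hw
  rw [h1, Set.image_insert_eq, Submodule.span_insert, ← h2]
  have hle := Submodule.finrank_add_le_finrank_add_finrank
    (Submodule.span ℝ {x -ᵥ w₀}) (Submodule.span ℝ ((fun y => y -ᵥ w₀) '' s))
  have hsing : Module.finrank ℝ (Submodule.span ℝ ({x -ᵥ w₀} : Set (EuclideanSpace ℝ (Fin N)))) ≤ 1 := by
    rcases eq_or_ne (x -ᵥ w₀) 0 with h | h
    · rw [h, Submodule.span_zero_singleton]; simp
    · rw [finrank_span_singleton h]
  rw [← h2] at hle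
  exact le_trans hle (by omega)

lemma vertex_in_simplex {P : Set X} (V' : Finset X) {w : X} (hw : w ∈ vertexSet P)
    (hmem : w ∈ convexHull ℝ (V' : Set X)) (hsub : convexHull ℝ (V' : Set X) ⊆ P) :
    w ∈ V' := by
  obtain ⟨g, c, hgc, hface⟩ := hw
  have hwP : w ∈ P ∧ g w = c := by
    have : w ∈ ({w} : Set X) := rfl
    rw [hface] at this; exact this
  have hcV' : ∀ v ∈ V', g v ≤ c := fun v hv => hgc v (hsub (subset_convexHull ℝ _ hv))
  have hfh := face_hull V' g c hcV'
  have : w ∈ convexHull ℝ ((V'.filter (fun v => g v = c) : Finset X) : Set X) := by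
    rw [← hfh]; exact ⟨hmem, hwP.2⟩
  have hne : (V'.filter (fun v => g v = c)).Nonempty := by
    by_contra h
    rw [Finset.not_nonempty_iff_eq_empty] at h
    rw [h] at this; simp at this
  obtain ⟨u, hu⟩ := hne
  obtain ⟨huV, hgu⟩ := Finset.mem_filter.1 hu
  have huw : u = w := by
    have : u ∈ ({w} : Set X) := by
      rw [hface]; exact ⟨hsub (subset_convexHull ℝ _ huV), hgu⟩
    exact this
  rwa [← huw]
end T3
section T4
open Finset
open scoped Classical
variable {N : ℕ}
local notation "X" => EuclideanSpace ℝ (Fin N)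

lemma zero_coeff {P : Set X} {d : ℕ} (E : Finset X) (hEP : P = convexHull ℝ (E : Set X))
    (hEV : (E : Set X) = vertexSet P) (hcard : E.card = d + 2)
    (hrank : Module.finrank ℝ (vectorSpan ℝ (E : Set X)) = d) (hd : 1 ≤ d)
    (hsimplicial : IsSimplicial P d) (f : X → ℝ) (hf0 : ∑ v ∈ E, f v = 0)
    (hfv : ∑ v ∈ E, f v • v = 0) {v₀ : X} (hv₀ : v₀ ∈ E) (hfz : f v₀ = 0) :
    ∀ v ∈ E, f v = 0 := by
  by_contra hcon
  push_neg at hcon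
  obtain ⟨u, huE, hfu⟩ := hcon
  set W := E.erase v₀ with hWdef
  have huW : u ∈ W := Finset.mem_erase.2 ⟨fun h => hfu (h ▸ hfz), huE⟩
  have hWcard : W.card = d + 1 := by
    rw [hWdef, Finset.card_erase_of_mem hv₀, hcard]; omega
  have hWne : W.Nonempty := Finset.card_pos.1 (by omega)
  obtain ⟨w₀, hw₀⟩ := hWne
  have hsumW : ∑ v ∈ W, f v = 0 := by
    rw [hWdef, Finset.sum_erase _ hfz, hf0]
  have hsumWv : ∑ v ∈ W, f v • v = 0 := by
    rw [hWdef, Finset.sum_erase _ (by rw [hfz, zero_smul]), hfv]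
  -- W is affinely dependent
  have hWdep : ¬ AffineIndependent ℝ (Subtype.val : {x // x ∈ W} → X) := by
    intro hind
    exact hfu (hind.eq_zero_of_sum_eq_zero_subtype hsumW hsumWv u huW)
  -- rank of W is exactly d - 1
  have hWrank_le : Module.finrank ℝ (vectorSpan ℝ (W : Set X)) ≤ d - 1 := by
    have hc2 : Fintype.card {x // x ∈ W} = (d - 1) + 2 := by
      rw [Fintype.card_coe, hWcard]; omega
    have := (finrank_vectorSpan_le_iff_not_affineIndependent ℝ
      (Subtype.val : {x // x ∈ W} → X) hc2).2 hWdep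
    have hre : Set.range (Subtype.val : {x // x ∈ W} → X) = (W : Set X) :=
      Subtype.range_coe
    rw [hre] at this
    exact this
  have hins : (E : Set X) = insert v₀ (W : Set X) := by
    ext x
    simp only [Set.mem_insert_iff, Finset.mem_coe, hWdef, Finset.mem_erase]
    constructor
    · intro h
      by_cases hx : x = v₀
      · exact Or.inl hx
      · exact Or.inr ⟨hx, h⟩
    · rintro (h | ⟨_, h⟩)
      · rw [h]; exact hv₀
      · exact h
  have hge : d ≤ Module.finrank ℝ (vectorSpan ℝ (W : Set X)) + 1 := by
    rw [← hrank, hins]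
    exact rank_insert (W : Set X) v₀ w₀ hw₀
  have hWrank : Module.finrank ℝ (vectorSpan ℝ (W : Set X)) = d - 1 := by omega
  -- v₀ is not in the affine span of W
  have hv₀span : v₀ ∉ affineSpan ℝ (W : Set X) := by
    intro hmem
    have hspan : affineSpan ℝ (E : Set X) = affineSpan ℝ (W : Set X) := by
      rw [hins]; exact affineSpan_insert_eq_affineSpan ℝ hmem
    have : Module.finrank ℝ (vectorSpan ℝ (E : Set X)) =
        Module.finrank ℝ (vectorSpan ℝ (W : Set X)) := by
      rw [← direction_affineSpan, ← direction_affineSpan, hspan]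
    omega
  -- separate v₀ from the span of W
  have hclosed : IsClosed ((affineSpan ℝ (W : Set X) : Set X)) :=
    AffineSubspace.closed_of_finiteDimensional _
  obtain ⟨g, u', hgv₀, hgu⟩ := geometric_hahn_banach_point_closed
    (AffineSubspace.convex _) hclosed hv₀span
  -- g is constant on the span of W
  have hconst : ∀ y ∈ affineSpan ℝ (W : Set X), ∀ y' ∈ affineSpan ℝ (W : Set X),
      g y = g y' := by
    intro y hy y' hy'
    by_contra hne
    set t : ℝ := (u' - g y) / (g y' - g y) with ht
    have hmem : t • (y' -ᵥ y) +ᵥ y ∈ affineSpan ℝ (W : Set X) :=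
      AffineSubspace.smul_vsub_vadd_mem _ t hy' hy hy
    have hne' : g y' - g y ≠ 0 := sub_ne_zero.2 (fun h => hne h.symm)
    have hval : g (t • (y' -ᵥ y) +ᵥ y) = u' := by
      have hsub : (y' : X) -ᵥ y = y' - y := rfl
      have hvadd : t • (y' - y) +ᵥ y = t • (y' - y) + y := rfl
      rw [hsub, hvadd, map_add, map_smul, map_sub, smul_eq_mul, ht,
        div_mul_cancel₀ _ hne']
      ring
    have := hgu _ hmem
    rw [hval] at this
    exact lt_irrefl u' this
  set c : ℝ := g w₀ with hc
  have hw₀span : (w₀ : X) ∈ affineSpan ℝ (W : Set X) := subset_affineSpan ℝ _ hw₀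
  have hgW : ∀ v ∈ W, g v = c := fun v hv =>
    hconst v (subset_affineSpan ℝ _ hv) w₀ hw₀span
  have hgv₀c : g v₀ < c := lt_trans hgv₀ (hgu _ hw₀span)
  have hcE : ∀ v ∈ E, g v ≤ c := by
    intro v hv
    rcases eq_or_ne v v₀ with h | h
    · rw [h]; exact le_of_lt hgv₀c
    · exact le_of_eq (hgW v (Finset.mem_erase.2 ⟨h, hv⟩))
  have hcP : ∀ x ∈ P, g x ≤ c := by
    rw [hEP]
    intro x hx
    exact convexHull_min hcE (convex_halfSpace_le ⟨g.map_add, by simp⟩ c) hx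
  set F : Set X := {x ∈ P | g x = c} with hF
  have hFace : IsFace P F := ⟨g.toLinearMap, c, hcP, rfl⟩
  have hfilter : E.filter (fun v => g v = c) = W := by
    ext v
    simp only [Finset.mem_filter]
    constructor
    · rintro ⟨hv, hgv⟩
      refine Finset.mem_erase.2 ⟨?_, hv⟩
      intro h; rw [h] at hgv; exact absurd hgv (ne_of_lt hgv₀c)
    · intro hv
      exact ⟨Finset.mem_of_mem_erase hv, hgW v hv⟩
  have hFW : F = convexHull ℝ (W : Set X) := by
    rw [hF, hEP]
    have := face_hull E g.toLinearMap c hcE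
    simp only [ContinuousLinearMap.coe_coe] at this ⊢
    rw [this, hfilter]
  have hFne : F.Nonempty := by
    rw [hFW]; exact ⟨w₀, subset_convexHull ℝ _ hw₀⟩
  have hFpdim : pdim F = d - 1 := by
    rw [pdim, hFW, affineSpan_convexHull, direction_affineSpan, hWrank]
  obtain ⟨V', hV'card, hV'ind, hV'eq⟩ := hsimplicial F hFace hFne hFpdim
  have hV'c : V'.card = d := by omega
  have hsubWV' : W ⊆ V' := by
    intro w hwW
    refine vertex_in_simplex (P := P) V' ?_ ?_ ?_
    · rw [← hEV]; exact Finset.mem_of_mem_erase hwW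
    · rw [← hV'eq, hFW]; exact subset_convexHull ℝ _ hwW
    · rw [← hV'eq]
      intro x hx
      exact hx.1
  have := Finset.card_le_card hsubWV'
  omega
end T4
section T5
open Finset
open scoped Classical
variable {N : ℕ}
local notation "X" => EuclideanSpace ℝ (Fin N)

lemma mem_intrinsic (A : Finset X)
    (hA : AffineIndependent ℝ (Subtype.val : {x // x ∈ A} → X)) (w : X → ℝ)
    (h1 : ∑ v ∈ A, w v = 1) (hpos : ∀ v ∈ A, 0 < w v) :
    (∑ v ∈ A, w v • v) ∈ intrinsicInterior ℝ (convexHull ℝ (A : Set X)) := by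
  set z : X := ∑ v ∈ A, w v • v with hz
  have hz_conv : z ∈ convexHull ℝ (A : Set X) := by
    have := Finset.centerMass_mem_convexHull A (fun v hv => (hpos v hv).le)
      (by rw [h1]; norm_num) (fun v hv => (Finset.mem_coe.2 hv : v ∈ (A : Set X)))
    rwa [Finset.centerMass_eq_of_sum_1 _ _ h1] at this
  -- extend A to an affine basis of the whole space
  have hAset : AffineIndependent ℝ (fun p : (A : Set X) => (p : X)) := hA
  obtain ⟨t, hsubt, htind, htspan⟩ :=
    exists_subset_affineIndependent_affineSpan_eq_top hAset
  have htfin : t.Finite := finite_set_of_fin_dim_affineIndependent ℝ htind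
  haveI := htfin.fintype
  let b : AffineBasis ↥t ℝ X := ⟨Subtype.val, htind, by rwa [Subtype.range_coe]⟩
  have hb_apply : ∀ j : ↥t, b j = (j : X) := fun j => rfl
  -- barycentric coordinates of affine combinations of A
  have hcoord : ∀ (μ : X → ℝ), (∑ v ∈ A, μ v = 1) → ∀ i : ↥t,
      b.coord i (∑ v ∈ A, μ v • v) = ∑ v ∈ A, μ v * b.coord i v := by
    intro μ hμ i
    have hac : ∑ v ∈ A, μ v • v = A.affineCombination ℝ id μ := by
      rw [A.affineCombination_eq_linear_combination id μ hμ]; rfl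
    rw [hac, Finset.map_affineCombination _ id μ hμ (b.coord i),
      A.affineCombination_eq_linear_combination _ μ hμ]
    simp [smul_eq_mul]
  have hbval : ∀ (i : ↥t), ∀ v ∈ A, b.coord i v = if (i : X) = v then 1 else 0 := by
    intro i v hv
    have hvt : v ∈ t := hsubt hv
    have := b.coord_apply i ⟨v, hvt⟩
    rw [hb_apply] at this
    rw [this]
    by_cases h : (i : X) = v
    · rw [if_pos (Subtype.ext h), if_pos h]
    · rw [if_neg (fun hh => h (by rw [hh])), if_neg h]
  have hcoord' : ∀ (μ : X → ℝ), (∑ v ∈ A, μ v = 1) → ∀ (v : X) (hv : v ∈ A),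
      b.coord ⟨v, hsubt hv⟩ (∑ u ∈ A, μ u • u) = μ v := by
    intro μ hμ v hv
    rw [hcoord μ hμ]
    have : ∀ u ∈ A, μ u * b.coord ⟨v, hsubt hv⟩ u = if v = u then μ u else 0 := by
      intro u hu
      rw [hbval _ u hu]
      by_cases h : v = u
      · simp [h]
      · rw [if_neg (by exact fun hh => h hh), if_neg h, mul_zero]
    rw [Finset.sum_congr rfl this, Finset.sum_ite_eq A v μ, if_pos hv]
  -- the open set
  set U : Set X := {x | ∀ i : ↥t, (i : X) ∈ A → 0 < b.coord i x} with hU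
  have hUopen : IsOpen U := by
    have : U = ⋂ i : ↥t, {x | (i : X) ∈ A → 0 < b.coord i x} := by
      ext x; simp [hU, Set.mem_iInter]
    rw [this]
    apply isOpen_iInter_of_finite
    intro i
    by_cases h : (i : X) ∈ A
    · have : {x | (i : X) ∈ A → 0 < b.coord i x} = (b.coord i) ⁻¹' (Set.Ioi 0) := by
        ext x; simp [h]
      rw [this]
      exact IsOpen.preimage (b.coord i).continuous_of_finiteDimensional isOpen_Ioi
    · have : {x | (i : X) ∈ A → 0 < b.coord i x} = Set.univ := by
        ext x; simp [h]
      rw [this]; exact isOpen_univ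
  have hzU : z ∈ U := by
    intro i hiA
    have := hcoord' w h1 (i : X) hiA
    have hieq : (⟨(i : X), hsubt hiA⟩ : ↥t) = i := Subtype.ext rfl
    rw [hieq] at this
    rw [hz, this]
    exact hpos _ hiA
  -- U ∩ span ⊆ hull
  have hkey : ∀ x, x ∈ U → x ∈ affineSpan ℝ (A : Set X) → x ∈ convexHull ℝ (A : Set X) := by
    intro x hxU hxsp
    obtain ⟨μ, hμ1, hμx⟩ := mem_affineSpan_finset hxsp
    have hμpos : ∀ v ∈ A, 0 < μ v := by
      intro v hv
      have h1' := hcoord' μ hμ1 v hv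
      rw [hμx] at h1'
      rw [← h1']
      exact hxU _ hv
    have := Finset.centerMass_mem_convexHull A (fun v hv => (hμpos v hv).le)
      (by rw [hμ1]; norm_num) (fun v hv => (Finset.mem_coe.2 hv : v ∈ (A : Set X)))
    rwa [Finset.centerMass_eq_of_sum_1 _ _ hμ1, hμx] at this
  -- conclude
  have hzsp : z ∈ affineSpan ℝ (convexHull ℝ (A : Set X)) :=
    subset_affineSpan ℝ _ hz_conv
  rw [mem_intrinsicInterior]
  refine ⟨⟨z, hzsp⟩, ?_, rfl⟩
  rw [mem_interior]
  refine ⟨(Subtype.val : ↥(affineSpan ℝ (convexHull ℝ (A : Set X))) → X) ⁻¹' U, ?_, ?_, ?_⟩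
  · rintro ⟨x, hx⟩ hp
    have hx' : x ∈ affineSpan ℝ (A : Set X) := by
      rwa [affineSpan_convexHull] at hx
    exact hkey x hp hx'
  · exact hUopen.preimage continuous_subtype_val
  · exact hzU
end T5

theorem stmt14 {N : ℕ} (P : Set (EuclideanSpace ℝ (Fin N))) (d : ℕ)
    (hP : IsPolytope P) (hdim : pdim P = d)
    (hsimplicial : IsSimplicial P d) (hvert : (vertexSet P).ncard = d + 2) :
    ∃ m, 1 ≤ m ∧ m ≤ d - 1 ∧
      ∃ (M : ℕ) (S₁ S₂ T : Set (EuclideanSpace ℝ (Fin M))),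
        IsSimplex S₁ m ∧ IsSimplex S₂ (d - m) ∧ IsDirectSum T S₁ S₂ ∧ CombEquiv P T := by
  classical
  obtain ⟨V, hV⟩ := hP
  obtain ⟨hPvtx, hvfin⟩ := hull_vertexSet V hV
  set E : Finset (EuclideanSpace ℝ (Fin N)) := hvfin.toFinset with hE
  have hEcoe : (E : Set (EuclideanSpace ℝ (Fin N))) = vertexSet P := hvfin.coe_toFinset
  have hEP : P = convexHull ℝ (E : Set (EuclideanSpace ℝ (Fin N))) := by
    rw [hEcoe]; exact hPvtx
  have hEcard : E.card = d + 2 := by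
    rw [← Set.ncard_coe_finset E, hEcoe, hvert]
  have hrankE : Module.finrank ℝ (vectorSpan ℝ (E : Set (EuclideanSpace ℝ (Fin N)))) = d := by
    rw [← direction_affineSpan]
    have hsp : affineSpan ℝ (E : Set (EuclideanSpace ℝ (Fin N))) = affineSpan ℝ P := by
      rw [hEP, affineSpan_convexHull]
    rw [hsp]; exact hdim
  have hd1 : 1 ≤ d := by
    by_contra h
    push_neg at h
    have hd0 : d = 0 := by omega
    obtain ⟨x, hx, y, hy, hxy⟩ := Finset.one_lt_card.1 (by omega : 1 < E.card)
    have hmem : x -ᵥ y ∈ vectorSpan ℝ (E : Set (EuclideanSpace ℝ (Fin N))) :=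
      vsub_mem_vectorSpan ℝ hx hy
    have hbot : vectorSpan ℝ (E : Set (EuclideanSpace ℝ (Fin N))) = ⊥ :=
      Submodule.finrank_eq_zero.1 (by rw [hrankE, hd0])
    rw [hbot, Submodule.mem_bot] at hmem
    exact hxy (by rwa [vsub_eq_zero_iff_eq] at hmem)
  have hnotind : ¬ AffineIndependent ℝ
      (Subtype.val : {x // x ∈ E} → EuclideanSpace ℝ (Fin N)) := by
    intro hind
    have hc : Fintype.card {x // x ∈ E} = (d + 1) + 1 := by
      rw [Fintype.card_coe, hEcard]
    have hr := hind.finrank_vectorSpan hc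
    have hre : Set.range (Subtype.val : {x // x ∈ E} → EuclideanSpace ℝ (Fin N))
        = (E : Set (EuclideanSpace ℝ (Fin N))) := Subtype.range_coe
    rw [hre] at hr
    omega
  obtain ⟨f, hfv, hf0, x₀, hx₀E, hx₀⟩ :=
    exists_nontrivial_relation_sum_zero_of_not_affine_ind hnotind
  have hall : ∀ v ∈ E, f v ≠ 0 := by
    intro v hv hzero
    exact hx₀ (zero_coeff E hEP hEcoe hEcard hrankE hd1 hsimplicial f hf0 hfv hv hzero x₀ hx₀E)
  set A : Finset (EuclideanSpace ℝ (Fin N)) := E.filter (fun v => 0 < f v) with hA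
  set B : Finset (EuclideanSpace ℝ (Fin N)) := E.filter (fun v => f v < 0) with hB
  have hABdisj : Disjoint A B := by
    rw [Finset.disjoint_left]
    intro a ha hb
    have h1 := (Finset.mem_filter.1 ha).2
    have h2 := (Finset.mem_filter.1 hb).2
    linarith
  have hABunion : A ∪ B = E := by
    ext v
    simp only [Finset.mem_union, hA, hB, Finset.mem_filter]
    constructor
    · rintro (⟨h, _⟩ | ⟨h, _⟩) <;> exact h
    · intro hv
      rcases lt_or_gt_of_ne (hall v hv) with h | h
      · exact Or.inr ⟨hv, h⟩
      · exact Or.inl ⟨hv, h⟩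
  have hfA : ∀ v ∈ A, 0 < f v := fun v hv => (Finset.mem_filter.1 hv).2
  have hfB : ∀ v ∈ B, f v < 0 := fun v hv => (Finset.mem_filter.1 hv).2
  have hAsubE : A ⊆ E := Finset.filter_subset _ _
  have hBsubE : B ⊆ E := Finset.filter_subset _ _
  have hsplit0 : ∑ v ∈ A, f v + ∑ v ∈ B, f v = 0 := by
    rw [← Finset.sum_union hABdisj, hABunion]; exact hf0
  have hsplitv : (∑ v ∈ A, f v • v) + ∑ v ∈ B, f v • v = 0 := by
    rw [← Finset.sum_union hABdisj, hABunion]; exact hfv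
  have hAne : A.Nonempty := by
    by_contra h
    rw [Finset.not_nonempty_iff_eq_empty] at h
    have hBE : B = E := by rw [← hABunion, h, Finset.empty_union]
    have hpos : (0:ℝ) < ∑ v ∈ B, -f v :=
      Finset.sum_pos (fun v hv => by linarith [hfB v hv]) ⟨x₀, hBE ▸ hx₀E⟩
    rw [Finset.sum_neg_distrib] at hpos
    rw [h, Finset.sum_empty] at hsplit0
    linarith
  have hBne : B.Nonempty := by
    by_contra h
    rw [Finset.not_nonempty_iff_eq_empty] at h
    have hAE : A = E := by rw [← hABunion, h, Finset.union_empty]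
    have hpos : (0:ℝ) < ∑ v ∈ A, f v :=
      Finset.sum_pos hfA ⟨x₀, hAE ▸ hx₀E⟩
    rw [h, Finset.sum_empty] at hsplit0
    linarith
  set s : ℝ := ∑ v ∈ A, f v with hs
  have hs_pos : 0 < s := Finset.sum_pos hfA hAne
  have hsB : ∑ v ∈ B, f v = -s := by
    rw [hs] at hsplit0 ⊢
    linarith
  -- a vertex is not in the hull of the other vertices
  have hvx : ∀ v ∈ E, v ∉ convexHull ℝ ((E.erase v : Finset (EuclideanSpace ℝ (Fin N))) :
      Set (EuclideanSpace ℝ (Fin N))) := by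
    intro v hv hmem
    have hvvtx : v ∈ vertexSet P := by rw [← hEcoe]; exact_mod_cast hv
    have hvext : v ∈ Set.extremePoints ℝ P := vertex_extreme v hvvtx
    have hsub : convexHull ℝ ((E.erase v : Finset (EuclideanSpace ℝ (Fin N))) :
        Set (EuclideanSpace ℝ (Fin N))) ⊆ P := by
      rw [hEP]
      exact convexHull_mono (by exact_mod_cast Finset.erase_subset v E)
    have hext2 : v ∈ Set.extremePoints ℝ (convexHull ℝ
        ((E.erase v : Finset (EuclideanSpace ℝ (Fin N))) :
          Set (EuclideanSpace ℝ (Fin N)))) := by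
      rw [mem_extremePoints]
      exact ⟨hmem, fun x₁ hx₁ x₂ hx₂ hseg =>
        (mem_extremePoints.1 hvext).2 x₁ (hsub hx₁) x₂ (hsub hx₂) hseg⟩
    exact (Finset.notMem_erase v E)
      (extremePoints_convexHull_subset (𝕜 := ℝ) hext2)
  -- |A| ≥ 2
  have hA2 : 2 ≤ A.card := by
    by_contra h
    push_neg at h
    have hcard1 : A.card = 1 := by
      have := Finset.card_pos.2 hAne; omega
    obtain ⟨a, ha⟩ := Finset.card_eq_one.1 hcard1
    have haA : a ∈ A := by rw [ha]; exact Finset.mem_singleton_self a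
    have haE : a ∈ E := hAsubE haA
    have hfa : f a = s := by rw [hs, ha, Finset.sum_singleton]
    have hsumA : ∑ v ∈ A, f v • v = f a • a := by rw [ha, Finset.sum_singleton]
    have hBv : ∑ v ∈ B, (-f v / s) • v = a := by
      have h1 : ∑ v ∈ B, f v • v = -(f a • a) := by
        rw [hsumA] at hsplitv
        exact (neg_eq_of_add_eq_zero_right hsplitv).symm
      have h2 : ∀ v ∈ B, (-f v / s) • v = s⁻¹ • (-(f v • v)) := by
        intro v hv
        rw [neg_div, neg_smul, smul_neg, div_eq_inv_mul, mul_smul]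
      rw [Finset.sum_congr rfl h2, ← Finset.smul_sum, Finset.sum_neg_distrib, h1,
        neg_neg, hfa, smul_smul, inv_mul_cancel₀ (ne_of_gt hs_pos), one_smul]
    have haconv : a ∈ convexHull ℝ ((B : Finset (EuclideanSpace ℝ (Fin N))) :
        Set (EuclideanSpace ℝ (Fin N))) := by
      have hmass := Finset.centerMass_mem_convexHull B
        (w := fun v => -f v / s)
        (fun v hv => le_of_lt (div_pos (by linarith [hfB v hv]) hs_pos))
        (by
          rw [← Finset.sum_div]
          rw [Finset.sum_neg_distrib, hsB, neg_neg]
          exact div_pos hs_pos hs_pos)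
        (z := id) (fun v hv => Finset.mem_coe.2 hv)
      have hsum1 : ∑ v ∈ B, (-f v / s) = 1 := by
        rw [← Finset.sum_div, Finset.sum_neg_distrib, hsB, neg_neg,
          div_self (ne_of_gt hs_pos)]
      rwa [Finset.centerMass_eq_of_sum_1 _ _ hsum1, (by rfl :
        (∑ v ∈ B, (-f v / s) • id v) = ∑ v ∈ B, (-f v / s) • v), hBv] at hmass
    have hBsub : B ⊆ E.erase a := by
      intro b hb
      refine Finset.mem_erase.2 ⟨?_, hBsubE hb⟩
      intro hba
      have := hfB b hb
      rw [hba, hfa] at this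
      linarith
    exact hvx a haE (convexHull_mono (by exact_mod_cast hBsub) haconv)
  -- |B| ≥ 2
  have hB2 : 2 ≤ B.card := by
    by_contra h
    push_neg at h
    have hcard1 : B.card = 1 := by
      have := Finset.card_pos.2 hBne; omega
    obtain ⟨b, hb⟩ := Finset.card_eq_one.1 hcard1
    have hbB : b ∈ B := by rw [hb]; exact Finset.mem_singleton_self b
    have hbE : b ∈ E := hBsubE hbB
    have hfb : f b = -s := by rw [← hsB, hb, Finset.sum_singleton]
    have hsumB : ∑ v ∈ B, f v • v = f b • b := by rw [hb, Finset.sum_singleton]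
    have hAv : ∑ v ∈ A, (f v / s) • v = b := by
      have h1 : ∑ v ∈ A, f v • v = -(f b • b) := by
        rw [hsumB] at hsplitv
        exact eq_neg_of_add_eq_zero_left hsplitv
      have h2 : ∀ v ∈ A, (f v / s) • v = s⁻¹ • (f v • v) := by
        intro v hv
        rw [div_eq_inv_mul, mul_smul]
      rw [Finset.sum_congr rfl h2, ← Finset.smul_sum, h1, hfb, neg_smul, neg_neg, smul_smul, inv_mul_cancel₀ (ne_of_gt hs_pos), one_smul]
    have hbconv : b ∈ convexHull ℝ ((A : Finset (EuclideanSpace ℝ (Fin N))) :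
        Set (EuclideanSpace ℝ (Fin N))) := by
      have hsum1 : ∑ v ∈ A, (f v / s) = 1 := by
        rw [← Finset.sum_div, ← hs, div_self (ne_of_gt hs_pos)]
      have hmass := Finset.centerMass_mem_convexHull A
        (w := fun v => f v / s)
        (fun v hv => le_of_lt (div_pos (hfA v hv) hs_pos))
        (by rw [hsum1]; norm_num)
        (z := id) (fun v hv => Finset.mem_coe.2 hv)
      rwa [Finset.centerMass_eq_of_sum_1 _ _ hsum1, (by rfl :
        (∑ v ∈ A, (f v / s) • id v) = ∑ v ∈ A, (f v / s) • v), hAv] at hmass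
    have hAsub : A ⊆ E.erase b := by
      intro a ha
      refine Finset.mem_erase.2 ⟨?_, hAsubE ha⟩
      intro hab
      have := hfA a ha
      rw [hab, hfb] at this
      linarith
    exact hvx b hbE (convexHull_mono (by exact_mod_cast hAsub) hbconv)
  have hcardsum : A.card + B.card = d + 2 := by
    rw [← Finset.card_union_of_disjoint hABdisj, hABunion, hEcard]
  -- affine independence of A
  have hAind : AffineIndependent ℝ
      (Subtype.val : {x // x ∈ A} → EuclideanSpace ℝ (Fin N)) := by
    by_contra h
    obtain ⟨g, hgv, hg0, y, hyA, hgy⟩ :=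
      exists_nontrivial_relation_sum_zero_of_not_affine_ind h
    set g' : EuclideanSpace ℝ (Fin N) → ℝ := fun v => if v ∈ A then g v else 0 with hg'
    have hg'0 : ∑ v ∈ E, g' v = 0 := by
      have h1 : ∑ v ∈ A, g' v = ∑ v ∈ A, g v :=
        Finset.sum_congr rfl (fun v hv => by simp [hg', hv])
      have h2 : ∑ v ∈ B, g' v = 0 :=
        Finset.sum_eq_zero (fun v hv => by
          simp [hg', Finset.disjoint_right.1 hABdisj hv])
      rw [← hABunion, Finset.sum_union hABdisj, h1, h2, hg0, add_zero]
    have hg'v : ∑ v ∈ E, g' v • v = 0 := by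
      have h1 : ∑ v ∈ A, g' v • v = ∑ v ∈ A, g v • v :=
        Finset.sum_congr rfl (fun v hv => by simp [hg', hv])
      have h2 : ∑ v ∈ B, g' v • v = 0 :=
        Finset.sum_eq_zero (fun v hv => by
          simp [hg', Finset.disjoint_right.1 hABdisj hv])
      rw [← hABunion, Finset.sum_union hABdisj, h1, h2, hgv, add_zero]
    obtain ⟨b₀, hb₀⟩ := hBne
    have hb₀A : b₀ ∉ A := Finset.disjoint_right.1 hABdisj hb₀
    have hzero := zero_coeff E hEP hEcoe hEcard hrankE hd1 hsimplicial g' hg'0 hg'v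
      (hBsubE hb₀) (by simp [hg', hb₀A])
    have hy0 := hzero y (hAsubE hyA)
    simp [hg', hyA] at hy0
    exact hgy hy0
  -- affine independence of B
  have hBind : AffineIndependent ℝ
      (Subtype.val : {x // x ∈ B} → EuclideanSpace ℝ (Fin N)) := by
    by_contra h
    obtain ⟨g, hgv, hg0, y, hyB, hgy⟩ :=
      exists_nontrivial_relation_sum_zero_of_not_affine_ind h
    set g' : EuclideanSpace ℝ (Fin N) → ℝ := fun v => if v ∈ B then g v else 0 with hg'
    have hg'0 : ∑ v ∈ E, g' v = 0 := by
      have h1 : ∑ v ∈ A, g' v = 0 :=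
        Finset.sum_eq_zero (fun v hv => by
          simp [hg', Finset.disjoint_left.1 hABdisj hv])
      have h2 : ∑ v ∈ B, g' v = ∑ v ∈ B, g v :=
        Finset.sum_congr rfl (fun v hv => by simp [hg', hv])
      rw [← hABunion, Finset.sum_union hABdisj, h1, h2, hg0, zero_add]
    have hg'v : ∑ v ∈ E, g' v • v = 0 := by
      have h1 : ∑ v ∈ A, g' v • v = 0 :=
        Finset.sum_eq_zero (fun v hv => by
          simp [hg', Finset.disjoint_left.1 hABdisj hv])
      have h2 : ∑ v ∈ B, g' v • v = ∑ v ∈ B, g v • v :=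
        Finset.sum_congr rfl (fun v hv => by simp [hg', hv])
      rw [← hABunion, Finset.sum_union hABdisj, h1, h2, hgv, zero_add]
    obtain ⟨a₀, ha₀⟩ := hAne
    have ha₀B : a₀ ∉ B := Finset.disjoint_left.1 hABdisj ha₀
    have hzero := zero_coeff E hEP hEcoe hEcard hrankE hd1 hsimplicial g' hg'0 hg'v
      (hAsubE ha₀) (by simp [hg', ha₀B])
    have hy0 := hzero y (hBsubE hyB)
    simp [hg', hyB] at hy0
    exact hgy hy0
  -- the common point z
  set wA : EuclideanSpace ℝ (Fin N) → ℝ := fun v => f v / s with hwA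
  have hwA1 : ∑ v ∈ A, wA v = 1 := by
    rw [hwA, ← Finset.sum_div, ← hs, div_self (ne_of_gt hs_pos)]
  have hwApos : ∀ v ∈ A, 0 < wA v := fun v hv => div_pos (hfA v hv) hs_pos
  set wB : EuclideanSpace ℝ (Fin N) → ℝ := fun v => -f v / s with hwB
  have hwB1 : ∑ v ∈ B, wB v = 1 := by
    rw [hwB, ← Finset.sum_div, Finset.sum_neg_distrib, hsB, neg_neg,
      div_self (ne_of_gt hs_pos)]
  have hwBpos : ∀ v ∈ B, 0 < wB v := fun v hv =>
    div_pos (by linarith [hfB v hv]) hs_pos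
  set z : EuclideanSpace ℝ (Fin N) := ∑ v ∈ A, wA v • v with hz
  have hzB : z = ∑ v ∈ B, wB v • v := by
    have hA' : z = s⁻¹ • ∑ v ∈ A, f v • v := by
      rw [hz, Finset.smul_sum]
      exact Finset.sum_congr rfl (fun v hv => by
        show wA v • v = s⁻¹ • (f v • v)
        rw [show wA v = f v / s from rfl, div_eq_inv_mul, mul_smul])
    have hB' : ∑ v ∈ B, wB v • v = s⁻¹ • ∑ v ∈ B, (-f v) • v := by
      rw [Finset.smul_sum]
      exact Finset.sum_congr rfl (fun v hv => by
        show wB v • v = s⁻¹ • ((-f v) • v)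
        rw [show wB v = -f v / s from rfl, div_eq_inv_mul, mul_smul])
    have hBA : ∑ v ∈ B, (-f v) • v = ∑ v ∈ A, f v • v := by
      have h1 : ∑ v ∈ A, f v • v = -(∑ v ∈ B, f v • v) :=
        eq_neg_of_add_eq_zero_left hsplitv
      rw [h1, ← Finset.sum_neg_distrib]
      exact Finset.sum_congr rfl (fun v hv => (neg_smul (f v) v))
    rw [hA', hB', hBA]
  have hzintA : z ∈ intrinsicInterior ℝ
      (convexHull ℝ ((A : Finset (EuclideanSpace ℝ (Fin N))) :
        Set (EuclideanSpace ℝ (Fin N)))) := by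
    rw [hz]; exact mem_intrinsic A hAind wA hwA1 hwApos
  have hzintB : z ∈ intrinsicInterior ℝ
      (convexHull ℝ ((B : Finset (EuclideanSpace ℝ (Fin N))) :
        Set (EuclideanSpace ℝ (Fin N)))) := by
    rw [hzB]; exact mem_intrinsic B hBind wB hwB1 hwBpos
  have hzconvA := intrinsicInterior_subset hzintA
  have hzconvB := intrinsicInterior_subset hzintB
  -- the affine spans intersect exactly in z
  have hinter : ((affineSpan ℝ ((A : Finset (EuclideanSpace ℝ (Fin N))) :
        Set (EuclideanSpace ℝ (Fin N)))) : Set (EuclideanSpace ℝ (Fin N))) ∩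
      (affineSpan ℝ ((B : Finset (EuclideanSpace ℝ (Fin N))) :
        Set (EuclideanSpace ℝ (Fin N)))) = {z} := by
    apply Set.Subset.antisymm
    · rintro x ⟨hxA, hxB⟩
      obtain ⟨α, hα1, hαx⟩ := mem_affineSpan_finset hxA
      obtain ⟨β, hβ1, hβx⟩ := mem_affineSpan_finset hxB
      set γ : EuclideanSpace ℝ (Fin N) → ℝ :=
        fun v => (if v ∈ A then α v else 0) - (if v ∈ B then β v else 0) with hγ
      have hγA : ∀ v ∈ A, γ v = α v := fun v hv => by
        simp [hγ, hv, Finset.disjoint_left.1 hABdisj hv]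
      have hγB : ∀ v ∈ B, γ v = -β v := fun v hv => by
        simp [hγ, hv, Finset.disjoint_right.1 hABdisj hv]
      have hγ0 : ∑ v ∈ E, γ v = 0 := by
        rw [← hABunion, Finset.sum_union hABdisj, Finset.sum_congr rfl hγA,
          Finset.sum_congr rfl hγB, hα1, Finset.sum_neg_distrib, hβ1]
        ring
      have hγv : ∑ v ∈ E, γ v • v = 0 := by
        have h1 : ∑ v ∈ A, γ v • v = ∑ v ∈ A, α v • v :=
          Finset.sum_congr rfl (fun v hv => by rw [hγA v hv])
        have h2 : ∑ v ∈ B, γ v • v = ∑ v ∈ B, -(β v • v) :=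
          Finset.sum_congr rfl (fun v hv => by rw [hγB v hv, neg_smul])
        rw [← hABunion, Finset.sum_union hABdisj, h1, h2, Finset.sum_neg_distrib,
          hαx, hβx, add_neg_cancel]
      obtain ⟨a₀, ha₀⟩ := hAne
      have hfa₀ : f a₀ ≠ 0 := ne_of_gt (hfA a₀ ha₀)
      set δ : EuclideanSpace ℝ (Fin N) → ℝ :=
        fun v => f a₀ * γ v - γ a₀ * f v with hδ
      have hδ0 : ∑ v ∈ E, δ v = 0 := by
        simp only [hδ]
        rw [Finset.sum_sub_distrib, ← Finset.mul_sum, ← Finset.mul_sum, hγ0, hf0]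
        ring
      have hδv : ∑ v ∈ E, δ v • v = 0 := by
        simp only [hδ]
        have hterm : ∀ v ∈ E, (f a₀ * γ v - γ a₀ * f v) • v
            = f a₀ • (γ v • v) - γ a₀ • (f v • v) := by
          intro v hv
          rw [sub_smul, smul_smul, smul_smul]
        rw [Finset.sum_congr rfl hterm, Finset.sum_sub_distrib, ← Finset.smul_sum,
          ← Finset.smul_sum, hγv, hfv, smul_zero, smul_zero, sub_zero]
      have hδa₀ : δ a₀ = 0 := by simp only [hδ]; ring
      have hδall := zero_coeff E hEP hEcoe hEcard hrankE hd1 hsimplicial δ hδ0 hδv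
        (hAsubE ha₀) hδa₀
      set t : ℝ := γ a₀ / f a₀ with ht'
      have hγt : ∀ v ∈ E, γ v = t * f v := by
        intro v hv
        have hv0 := hδall v hv
        simp only [hδ] at hv0
        rw [ht', div_mul_eq_mul_div, eq_div_iff hfa₀]
        linear_combination hv0
      have hts : t * s = 1 := by
        have h1 : ∑ v ∈ A, γ v = 1 := by
          rw [Finset.sum_congr rfl hγA, hα1]
        rw [Finset.sum_congr rfl (fun v hv => hγt v (hAsubE hv)),
          ← Finset.mul_sum, ← hs] at h1
        exact h1
      have hαf : ∀ v ∈ A, α v = wA v := by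
        intro v hv
        have h1 := hγA v hv
        have h2 := hγt v (hAsubE hv)
        rw [h1] at h2
        rw [h2, hwA]
        rw [eq_div_iff (ne_of_gt hs_pos)]
        linear_combination f v * hts
      rw [Set.mem_singleton_iff, ← hαx, hz]
      exact Finset.sum_congr rfl (fun v hv => by rw [hαf v hv])
    · rintro x hx
      rw [Set.mem_singleton_iff] at hx
      subst hx
      exact ⟨convexHull_subset_affineSpan _ hzconvA,
        convexHull_subset_affineSpan _ hzconvB⟩
  -- assemble
  have hAcd : A.card ≤ d := by omega
  refine ⟨A.card - 1, by omega, by omega, N,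
    convexHull ℝ ((A : Finset (EuclideanSpace ℝ (Fin N))) : Set (EuclideanSpace ℝ (Fin N))),
    convexHull ℝ ((B : Finset (EuclideanSpace ℝ (Fin N))) : Set (EuclideanSpace ℝ (Fin N))),
    P, ⟨A, by omega, hAind, rfl⟩, ⟨B, by omega, hBind, rfl⟩, ?_, ⟨OrderIso.refl _⟩⟩
  refine ⟨z, ?_, hzintA, hzintB, ?_⟩
  · rw [affineSpan_convexHull, affineSpan_convexHull]
    exact hinter
  · rw [convexHull_convexHull_union_left, convexHull_convexHull_union_right,
      ← Finset.coe_union, hABunion, ← hEP]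
end
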